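/- arXiv:1908.02189 — 9 statements merged into one kernel-verified Lean document; each statement's English description precedes it below -/
import Mathlib

section
/- Let R be a ring and M an injective left R-module. If the countable direct sum M^(ℕ) is injective, then the direct sum M^(I) is injective for every index set I. -/
universe u

/-- Core extension lemma: given an injection `u` from a subset `C` of `I` into `ℕ`, and a
linear map `g` from an ideal `A` into `I →₀ M`, injectivity of `ℕ →₀ M` produces an element
`x : ℕ →₀ M` such that `(a • x) (u c) = (g a) c` for all `a ∈ A` and `c ∈ C`. -/
lemma sigma_injective_core {R : Type u} [Ring R] {M : Type u} [AddCommGroup M] [Module R M]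
    (hcount : Module.Injective R (ℕ →₀ M)) {I : Type u} (A : Ideal R)
    (g : A →ₗ[R] (I →₀ M)) (C : Set I) (u : C → ℕ) (hu : Function.Injective u) :
    ∃ x : ℕ →₀ M, ∀ (a : A) (c : C), ((a : R) • x) (u c) = (g a) (c : I) := by
  set φ : A →ₗ[R] (ℕ →₀ M) :=
    (Finsupp.lmapDomain M R u).comp
      (((Finsupp.lcomapDomain (Subtype.val : C → I) Subtype.val_injective)).comp g) with hφ
  obtain ⟨h, hh⟩ := hcount.out A.subtype (Submodule.injective_subtype A) φ
  refine ⟨h 1, fun a c => ?_⟩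
  have h1 : (a : R) • h 1 = φ a := by
    rw [← map_smul, smul_eq_mul, mul_one]
    exact hh a
  rw [h1, hφ]
  simp only [LinearMap.comp_apply, Finsupp.lmapDomain_apply]
  rw [Finsupp.mapDomain_apply hu]
  rfl

/-- If `M` is injective and the countable direct sum `M^(ℕ)` is injective, then `M^(I)` is
injective for every index set `I`. -/
theorem sigma_injective_of_countable (R : Type u) [Ring R] (M : Type u)
    [AddCommGroup M] [Module R M]
    (hM : Module.Injective R M)
    (hcount : Module.Injective R (ℕ →₀ M)) :
    ∀ (I : Type u), Module.Injective R (I →₀ M) := by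
  intro I
  classical
  apply Module.Baer.injective
  intro A g
  by_cases hfin : ∃ F : Finset I, ∀ a : A, (g a).support ⊆ F
  · -- all images supported in a common finite set `F`
    obtain ⟨F, hF⟩ := hfin
    set C : Set I := ↑F with hC
    have : Countable C := (F.countable_toSet).to_subtype
    obtain ⟨u, hu⟩ := Countable.exists_injective_nat C
    obtain ⟨x, hx⟩ := sigma_injective_core hcount A g C u hu
    -- pull `x` back to an element `y : I →₀ M`
    set z : C →₀ M := Finsupp.comapDomain u x hu.injOn with hz
    set y : I →₀ M := Finsupp.mapDomain (Subtype.val : C → I) z with hy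
    refine ⟨LinearMap.toSpanSingleton R _ y, fun r hr => ?_⟩
    ext i
    simp only [LinearMap.toSpanSingleton_apply]
    by_cases hi : i ∈ C
    · have hyi : y i = x (u ⟨i, hi⟩) := by
        have h1 := Finsupp.mapDomain_apply Subtype.val_injective z (⟨i, hi⟩ : C)
        have h2 : z ⟨i, hi⟩ = x (u ⟨i, hi⟩) := Finsupp.comapDomain_apply _ _ _ _
        exact h1.trans h2
      have := hx ⟨r, hr⟩ ⟨i, hi⟩
      simp only [Finsupp.smul_apply] at this ⊢
      rw [hyi, this]
    · have hyi : y i = 0 := by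
        rw [hy]
        apply Finsupp.mapDomain_notin_range
        rintro ⟨c, rfl⟩
        exact hi c.2
      have hgi : (g ⟨r, hr⟩) i = 0 := by
        have := hF ⟨r, hr⟩
        by_contra hne
        exact hi (this (Finsupp.mem_support_iff.mpr hne))
      simp only [Finsupp.smul_apply, hyi, smul_zero, hgi]
  · -- otherwise, build an increasing chain of finite sets and derive a contradiction
    exfalso
    push_neg at hfin
    choose pick hpick using hfin
    let F : ℕ → Finset I := fun n => Nat.rec (motive := fun _ => Finset I) ∅ (fun _ Fn => Fn ∪ (g (pick Fn)).support) n
    have hFsucc : ∀ n, F (n + 1) = F n ∪ (g (pick (F n))).support := fun n => rfl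
    have hmono : Monotone F := monotone_nat_of_le_succ fun n => by
      rw [hFsucc]; exact Finset.subset_union_left
    set C : Set I := ⋃ n, (↑(F n) : Set I) with hC
    have hcntC : C.Countable := Set.countable_iUnion fun n => (F n).countable_toSet
    have : Countable C := hcntC.to_subtype
    obtain ⟨u, hu⟩ := Countable.exists_injective_nat C
    obtain ⟨x, hx⟩ := sigma_injective_core hcount A g C u hu
    -- the set of coordinates of `C` where `x` is nonzero is finite
    have hTfin : {c : C | u c ∈ x.support}.Finite :=
      Set.Finite.preimage hu.injOn x.support.finite_toSet
    -- find `N` with all such coordinates in `F N`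
    have hwit : ∀ c : C, ∃ n, (c : I) ∈ F n := by
      intro c
      obtain ⟨n, hn⟩ := Set.mem_iUnion.mp c.2
      exact ⟨n, hn⟩
    obtain ⟨N, hN⟩ : ∃ N, ∀ c ∈ {c : C | u c ∈ x.support}, (c : I) ∈ F N := by
      obtain ⟨T, hT⟩ := hTfin.exists_finset_coe
      refine ⟨T.sup fun c => Nat.find (hwit c), fun c hc => ?_⟩
      have hcT : c ∈ T := by rw [← Finset.mem_coe, hT]; exact hc
      exact hmono (Finset.le_sup hcT) (Nat.find_spec (hwit c))
    -- now get the contradiction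
    set a := pick (F N) with ha
    obtain ⟨i, hi_supp, hi_not⟩ := Finset.not_subset.mp (hpick (F N))
    have hiC : i ∈ C :=
      Set.mem_iUnion.mpr ⟨N + 1, Finset.mem_coe.mpr
        (by rw [hFsucc]; exact Finset.mem_union_right _ hi_supp)⟩
    have hxi := hx a ⟨i, hiC⟩
    have hgi : (g a) i ≠ 0 := Finsupp.mem_support_iff.mp hi_supp
    have hxne : x (u ⟨i, hiC⟩) ≠ 0 := by
      intro h0
      rw [Finsupp.smul_apply, h0, smul_zero] at hxi
      exact hgi hxi.symm
    have : (⟨i, hiC⟩ : C) ∈ {c : C | u c ∈ x.support} :=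
      Finsupp.mem_support_iff.mpr hxne
    exact hi_not (hN _ this)
end

section
/- Let R be a ring. If M and N are injective left R-modules and there exist injective R-linear maps f : M → N and g : N → M, then M and N are isomorphic as R-modules. -/
universe u

namespace BumbyAux

open Submodule LinearMap

variable {R : Type u} [Ring R]

theorem inj_of_equiv {V W : Type u} [AddCommGroup V] [Module R V] [AddCommGroup W] [Module R W]
    (e : V ≃ₗ[R] W) (hV : Module.Injective R V) : Module.Injective R W :=
  ⟨fun X Y _ _ _ _ i hi g => by
    obtain ⟨h, hh⟩ := hV.out i hi ((e.symm : W →ₗ[R] V).comp g)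
    exact ⟨(e : V →ₗ[R] W).comp h, fun x => by
      simp only [LinearMap.comp_apply, hh x, LinearEquiv.coe_coe, LinearEquiv.apply_symm_apply]⟩⟩

theorem inj_retract {V W : Type u} [AddCommGroup V] [Module R V] [AddCommGroup W] [Module R W]
    (i : V →ₗ[R] W) (r : W →ₗ[R] V) (hr : ∀ v, r (i v) = v)
    (hW : Module.Injective R W) : Module.Injective R V :=
  ⟨fun X Y _ _ _ _ j hj g => by
    obtain ⟨h, hh⟩ := hW.out j hj (i.comp g)
    exact ⟨r.comp h, fun x => by
      simp only [LinearMap.comp_apply, hh x, hr]⟩⟩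

theorem inj_prod {V W : Type u} [AddCommGroup V] [Module R V] [AddCommGroup W] [Module R W]
    (hV : Module.Injective R V) (hW : Module.Injective R W) : Module.Injective R (V × W) :=
  ⟨fun X Y _ _ _ _ j hj g => by
    obtain ⟨h₁, hh₁⟩ := hV.out j hj ((LinearMap.fst R V W).comp g)
    obtain ⟨h₂, hh₂⟩ := hW.out j hj ((LinearMap.snd R V W).comp g)
    exact ⟨h₁.prod h₂, fun x => by
      have e1 := hh₁ x; have e2 := hh₂ x
      simp only [LinearMap.comp_apply, LinearMap.fst_apply, LinearMap.snd_apply] at e1 e2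
      simp only [LinearMap.prod_apply, Function.prod, e1, e2]⟩⟩

theorem inj_summand {W : Type u} [AddCommGroup W] [Module R W]
    (P : Submodule R W) (hP : Module.Injective R ↥P) : ∃ C, IsCompl P C := by
  obtain ⟨r, hr⟩ := hP.out P.subtype (injective_subtype P) LinearMap.id
  exact ⟨LinearMap.ker r, LinearMap.isCompl_of_proj fun x => hr x⟩

/-- `p` is an essential submodule of `V`. -/
def EssTop {V : Type u} [AddCommGroup V] [Module R V] (p : Submodule R V) : Prop :=
  ∀ v : V, v ≠ 0 → ∃ r : R, r • v ∈ p ∧ r • v ≠ 0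

/-- `A` is an essential submodule of `B`, inside an ambient module. -/
def IsEssIn {V : Type u} [AddCommGroup V] [Module R V] (A B : Submodule R V) : Prop :=
  A ≤ B ∧ ∀ v ∈ B, v ≠ 0 → ∃ r : R, r • v ∈ A ∧ r • v ≠ 0

theorem IsEssIn.refl {V : Type u} [AddCommGroup V] [Module R V] (A : Submodule R V) :
    IsEssIn A A :=
  ⟨le_rfl, fun v hv hv0 => ⟨1, by simpa [one_smul] using hv, by simpa [one_smul] using hv0⟩⟩

theorem essTop_comap {V : Type u} [AddCommGroup V] [Module R V] {A B : Submodule R V}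
    (h : IsEssIn A B) : EssTop (A.comap B.subtype) := by
  rintro ⟨v, hvB⟩ hv0
  have hv0' : v ≠ 0 := fun hh => hv0 (Subtype.ext hh)
  obtain ⟨r, hr1, hr2⟩ := h.2 v hvB hv0'
  refine ⟨r, hr1, fun hh => hr2 (congrArg Subtype.val hh)⟩

theorem essTop_prod_top {V W : Type u} [AddCommGroup V] [Module R V] [AddCommGroup W] [Module R W]
    {p : Submodule R W} (hp : EssTop p) :
    EssTop ((⊤ : Submodule R V).prod p) := by
  rintro ⟨c, e⟩ hce
  by_cases he : e = 0
  · refine ⟨1, ⟨trivial, ?_⟩, ?_⟩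
    · show (1:R) • e ∈ p
      simp [he]
    · simpa [one_smul] using hce
  · obtain ⟨r, hr1, hr2⟩ := hp e he
    refine ⟨r, ⟨trivial, hr1⟩, fun hh => hr2 ?_⟩
    simpa using congrArg Prod.snd hh

/-- The obvious equivalence `↥(⊤.prod p) ≃ V × ↥p`. -/
def prodTopEquiv {V W : Type u} [AddCommGroup V] [Module R V] [AddCommGroup W] [Module R W]
    (p : Submodule R W) : ↥((⊤ : Submodule R V).prod p) ≃ₗ[R] V × ↥p where
  toFun x := (x.1.1, ⟨x.1.2, x.2.2⟩)
  map_add' x y := rfl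
  map_smul' r x := rfl
  invFun y := ⟨(y.1, ↑y.2), ⟨trivial, y.2.2⟩⟩
  left_inv x := rfl
  right_inv y := rfl

theorem hull_unique {V W : Type u} [AddCommGroup V] [Module R V] [AddCommGroup W] [Module R W]
    (hV : Module.Injective R V) (hW : Module.Injective R W)
    (A : Submodule R V) (B : Submodule R W) (hA : EssTop A) (hB : EssTop B)
    (e : ↥A ≃ₗ[R] ↥B) : Nonempty (V ≃ₗ[R] W) := by
  obtain ⟨h, hh⟩ := hW.out A.subtype (injective_subtype A) (B.subtype.comp (e : ↥A →ₗ[R] ↥B))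
  have hA' : ∀ x : ↥A, h ↑x = ↑(e x) := fun x => by
    simpa [LinearMap.comp_apply] using hh x
  have hinj : Function.Injective h := by
    rw [← LinearMap.ker_eq_bot, eq_bot_iff]
    intro v hv
    rw [LinearMap.mem_ker] at hv
    rw [Submodule.mem_bot]
    by_contra hv0
    obtain ⟨r, hr1, hr2⟩ := hA v hv0
    have h1 : h (r • v) = 0 := by rw [map_smul, hv, smul_zero]
    have h2 : (↑(e ⟨r • v, hr1⟩) : W) = 0 := by rw [← hA' ⟨r • v, hr1⟩]; exact h1
    have h4 : (⟨r • v, hr1⟩ : ↥A) = 0 := e.injective (by rw [map_zero]; exact Subtype.ext h2)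
    exact hr2 (congrArg Subtype.val h4)
  have hBle : B ≤ LinearMap.range h := by
    intro b hb
    refine ⟨(e.symm ⟨b, hb⟩ : ↥A), ?_⟩
    rw [hA' (e.symm ⟨b, hb⟩), LinearEquiv.apply_symm_apply]
  have hRinj : Module.Injective R ↥(LinearMap.range h) :=
    inj_of_equiv (LinearEquiv.ofInjective h hinj) hV
  obtain ⟨W', hcompl⟩ := inj_summand (LinearMap.range h) hRinj
  have hW'bot : W' = ⊥ := by
    rw [eq_bot_iff]
    intro w hw
    rw [Submodule.mem_bot]
    by_contra hw0
    obtain ⟨r, hr1, hr2⟩ := hB w hw0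
    have hmem1 : r • w ∈ LinearMap.range h := hBle hr1
    have hmem2 : r • w ∈ W' := W'.smul_mem r hw
    exact hr2 (Submodule.disjoint_def.mp hcompl.disjoint _ hmem1 hmem2)
  have hsurj : Function.Surjective h := by
    rw [← LinearMap.range_eq_top]
    have := hcompl.sup_eq_top
    rwa [hW'bot, sup_bot_eq] at this
  exact ⟨LinearEquiv.ofBijective h ⟨hinj, hsurj⟩⟩

theorem exists_injective_ess_ext {Q : Type u} [AddCommGroup Q] [Module R Q]
    (hQ : Module.Injective R Q) (D : Submodule R Q) :
    ∃ (E F : Submodule R Q), IsEssIn D E ∧ Module.Injective R ↥E ∧ IsCompl E F := by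
  obtain ⟨E, hDE, hEmax⟩ := zorn_le_nonempty₀ {B : Submodule R Q | IsEssIn D B}
    (fun c hcS hchain y hyc => by
      refine ⟨sSup c, ⟨le_trans (hcS hyc).1 (le_sSup hyc), ?_⟩, fun z hz => le_sSup hz⟩
      intro v hv hv0
      obtain ⟨B, hBc, hvB⟩ := (Submodule.mem_sSup_of_directed ⟨y, hyc⟩ hchain.directedOn).mp hv
      exact (hcS hBc).2 v hvB hv0) D (IsEssIn.refl D)
  have hE : IsEssIn D E := hEmax.prop
  obtain ⟨C₂, -, hC₂max⟩ := zorn_le_nonempty₀ {W : Submodule R Q | W ⊓ E = ⊥}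
    (fun c hcS hchain y hyc => by
      refine ⟨sSup c, ?_, fun z hz => le_sSup hz⟩
      rw [Set.mem_setOf_eq, eq_bot_iff]
      intro x hx
      obtain ⟨hx1, hx2⟩ := Submodule.mem_inf.mp hx
      obtain ⟨B, hBc, hxB⟩ := (Submodule.mem_sSup_of_directed ⟨y, hyc⟩ hchain.directedOn).mp hx1
      have hB := hcS hBc
      rw [Set.mem_setOf_eq] at hB
      rw [← hB]
      exact Submodule.mem_inf.mpr ⟨hxB, hx2⟩) ⊥ (by simp)
  have hdisj : C₂ ⊓ E = ⊥ := hC₂max.prop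
  have hπEinj : Function.Injective (C₂.mkQ.comp E.subtype) := by
    rw [← LinearMap.ker_eq_bot, eq_bot_iff]
    rintro ⟨x, hxE⟩ hx
    rw [LinearMap.mem_ker, LinearMap.comp_apply, Submodule.subtype_apply,
      Submodule.mkQ_apply, Submodule.Quotient.mk_eq_zero] at hx
    have hx0 : x = 0 := by
      have hmem : x ∈ C₂ ⊓ E := Submodule.mem_inf.mpr ⟨hx, hxE⟩
      rwa [hdisj, Submodule.mem_bot] at hmem
    rw [Submodule.mem_bot]
    exact Subtype.ext hx0
  have hessIm : EssTop (E.map C₂.mkQ) := by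
    intro vb hvb0
    obtain ⟨v, rfl⟩ := C₂.mkQ_surjective vb
    have hvC : v ∉ C₂ := fun hv =>
      hvb0 (by rwa [Submodule.mkQ_apply, Submodule.Quotient.mk_eq_zero])
    have hne : (C₂ ⊔ Submodule.span R {v}) ⊓ E ≠ ⊥ := by
      intro hbot
      have hle : C₂ ⊔ Submodule.span R {v} ≤ C₂ := hC₂max.le_of_ge hbot le_sup_left
      exact hvC (hle (Submodule.mem_sup_right (Submodule.mem_span_singleton_self v)))
    obtain ⟨e, heIE, he0⟩ := (Submodule.ne_bot_iff _).mp hne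
    obtain ⟨hesup, heE⟩ := Submodule.mem_inf.mp heIE
    obtain ⟨c, hc, s, hs, hcs⟩ := Submodule.mem_sup.mp hesup
    obtain ⟨r, rfl⟩ := Submodule.mem_span_singleton.mp hs
    have hmk : C₂.mkQ e = r • C₂.mkQ v := by
      rw [← hcs, map_add, map_smul]
      have hc0 : C₂.mkQ c = 0 := by rwa [Submodule.mkQ_apply, Submodule.Quotient.mk_eq_zero]
      rw [hc0, zero_add]
    refine ⟨r, ?_, ?_⟩
    · rw [← hmk]
      exact Submodule.mem_map_of_mem heE
    · intro h0
      rw [← hmk] at h0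
      rw [Submodule.mkQ_apply, Submodule.Quotient.mk_eq_zero] at h0
      have hmem : e ∈ C₂ ⊓ E := Submodule.mem_inf.mpr ⟨h0, heE⟩
      rw [hdisj, Submodule.mem_bot] at hmem
      exact he0 hmem
  have hrangeJ : LinearMap.range (C₂.mkQ.comp E.subtype) = E.map C₂.mkQ := by
    rw [LinearMap.range_comp, Submodule.range_subtype]
  let eE2 : ↥E ≃ₗ[R] ↥(E.map C₂.mkQ) :=
    (LinearEquiv.ofInjective _ hπEinj).trans (LinearEquiv.ofEq _ _ hrangeJ)
  have heE2 : ∀ x : ↥E, (↑(eE2 x) : Q ⧸ C₂) = C₂.mkQ ↑x := fun x => rfl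
  obtain ⟨ψ, hψ⟩ := hQ.out (E.map C₂.mkQ).subtype (Submodule.injective_subtype _)
    (E.subtype.comp (eE2.symm : ↥(E.map C₂.mkQ) →ₗ[R] ↥E))
  have hψ' : ∀ x : ↥(E.map C₂.mkQ), ψ ↑x = ↑(eE2.symm x) := fun x => by
    simpa [LinearMap.comp_apply] using hψ x
  have hkey : ∀ e ∈ E, ψ (C₂.mkQ e) = e := by
    intro e he
    have hmem : C₂.mkQ e ∈ E.map C₂.mkQ := Submodule.mem_map_of_mem he
    have h1 : (⟨C₂.mkQ e, hmem⟩ : ↥(E.map C₂.mkQ)) = eE2 ⟨e, he⟩ :=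
      Subtype.ext (heE2 ⟨e, he⟩).symm
    calc ψ (C₂.mkQ e) = ψ ↑(⟨C₂.mkQ e, hmem⟩ : ↥(E.map C₂.mkQ)) := rfl
      _ = ↑(eE2.symm ⟨C₂.mkQ e, hmem⟩) := hψ' _
      _ = ↑(eE2.symm (eE2 ⟨e, he⟩)) := by rw [h1]
      _ = e := by rw [LinearEquiv.symm_apply_apply]
  have hψinj : Function.Injective ψ := by
    rw [← LinearMap.ker_eq_bot, eq_bot_iff]
    intro vb hvb
    rw [LinearMap.mem_ker] at hvb
    rw [Submodule.mem_bot]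
    by_contra hvb0
    obtain ⟨r, hr1, hr2⟩ := hessIm vb hvb0
    have h1 : ψ (r • vb) = 0 := by rw [map_smul, hvb, smul_zero]
    rw [hψ' ⟨r • vb, hr1⟩] at h1
    have h2 : eE2.symm ⟨r • vb, hr1⟩ = 0 := Subtype.ext h1
    have h3 : (⟨r • vb, hr1⟩ : ↥(E.map C₂.mkQ)) = 0 := by
      have h4 := congrArg eE2 h2
      rwa [LinearEquiv.apply_symm_apply, map_zero] at h4
    exact hr2 (congrArg Subtype.val h3)
  have hψmapE : ∀ x : ↥(E.map C₂.mkQ), ψ ↑x ∈ E := fun x => by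
    rw [hψ' x]; exact (eE2.symm x).2
  have hErange : E ≤ LinearMap.range ψ := fun e he => ⟨C₂.mkQ e, hkey e he⟩
  have hEssRange : IsEssIn D (LinearMap.range ψ) := by
    refine ⟨le_trans hE.1 hErange, ?_⟩
    rintro v ⟨vb, rfl⟩ hv0
    have hvb0 : vb ≠ 0 := fun h => hv0 (by rw [h, map_zero])
    obtain ⟨r, hr1, hr2⟩ := hessIm vb hvb0
    have hwE : ψ (r • vb) ∈ E := hψmapE ⟨r • vb, hr1⟩
    have hw0 : ψ (r • vb) ≠ 0 := fun h => hr2 (hψinj (by rw [h, map_zero]))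
    obtain ⟨s, hs1, hs2⟩ := hE.2 _ hwE hw0
    refine ⟨s * r, ?_, ?_⟩
    · rw [mul_smul, ← map_smul]
      exact hs1
    · rw [mul_smul, ← map_smul]
      exact hs2
  have hrangeE : LinearMap.range ψ = E := (hEmax.le_of_ge hEssRange hErange).antisymm hErange
  have hrangeψ : ∀ q : Q ⧸ C₂, ψ q ∈ E := fun q => hrangeE ▸ LinearMap.mem_range_self ψ q
  let ρ : Q →ₗ[R] ↥E := LinearMap.codRestrict E (ψ.comp C₂.mkQ) (fun x => hrangeψ _)
  have hρ : ∀ x : ↥E, ρ ↑x = x := fun x => Subtype.ext (hkey ↑x x.2)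
  exact ⟨E, LinearMap.ker ρ, hE, inj_retract E.subtype ρ (fun v => hρ v) hQ,
    LinearMap.isCompl_of_proj hρ⟩

end BumbyAux

open BumbyAux Submodule LinearMap in
/-- Bumby's theorem: two injective modules that embed into each other are isomorphic. -/
theorem bumby (R : Type u) [Ring R] (M N : Type u)
    [AddCommGroup M] [Module R M] [AddCommGroup N] [Module R N]
    (hM : Module.Injective R M) (hN : Module.Injective R N)
    (f : M →ₗ[R] N) (hf : Function.Injective f)
    (g : N →ₗ[R] M) (hg : Function.Injective g) :
    Nonempty (M ≃ₗ[R] N) := by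
  classical
  set N₀ : Submodule R M := LinearMap.range g with hN₀def
  have hN₀inj : Module.Injective R ↥N₀ := inj_of_equiv (LinearEquiv.ofInjective g hg) hN
  obtain ⟨C, hcompl⟩ := inj_summand N₀ hN₀inj
  -- `C` is injective, being a retract of `M`
  let projC : M →ₗ[R] ↥C := Submodule.linearProjOfIsCompl C N₀ hcompl.symm
  have hprojC : ∀ x : ↥C, projC ↑x = x := fun x =>
    Submodule.linearProjOfIsCompl_apply_left hcompl.symm x
  have hCinj : Module.Injective R ↥C := inj_retract C.subtype projC (fun v => hprojC v) hM
  -- the composite embedding `u : M → M`, with range inside `N₀`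
  let u : M →ₗ[R] M := g.comp f
  have hu : Function.Injective u := fun a b hab => hf (hg hab)
  have hurange : LinearMap.range u ≤ N₀ := LinearMap.range_comp_le_range f g
  -- the Eilenberg swindle submodule `D = ⨆ n, uⁿ C`
  let D : Submodule R M := ⨆ n : ℕ, Submodule.map (u ^ n) C
  have h0map : Submodule.map (u ^ 0) C = C := by
    rw [pow_zero, Module.End.one_eq_id, Submodule.map_id]
  have hmapsucc : ∀ n : ℕ, Submodule.map (u ^ (n+1)) C = Submodule.map u (Submodule.map (u ^ n) C) := by
    intro n
    rw [pow_succ', Module.End.mul_eq_comp, Submodule.map_comp]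
  have hmapuD : Submodule.map u D = ⨆ n : ℕ, Submodule.map (u ^ (n+1)) C := by
    rw [Submodule.map_iSup]
    exact iSup_congr fun n => (hmapsucc n).symm
  have hDsplit : D = C ⊔ Submodule.map u D := by
    apply le_antisymm
    · refine iSup_le fun n => ?_
      cases n with
      | zero => rw [h0map]; exact le_sup_left
      | succ n =>
        refine le_sup_of_le_right ?_
        rw [hmapuD]
        exact le_iSup (fun m => Submodule.map (u ^ (m+1)) C) n
    · apply sup_le
      · rw [← h0map]; exact le_iSup (fun n => Submodule.map (u ^ n) C) 0
      · rw [hmapuD]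
        exact iSup_le fun n => le_iSup (fun m => Submodule.map (u ^ m) C) (n+1)
  have hmapuDN : Submodule.map u D ≤ N₀ := by
    intro x hx
    obtain ⟨d, -, rfl⟩ := hx
    exact hurange ⟨d, rfl⟩
  have hdisjCD : ∀ x, x ∈ C → x ∈ Submodule.map u D → x = 0 := fun x hxC hxD =>
    Submodule.disjoint_def.mp hcompl.disjoint x (hmapuDN hxD) hxC
  -- `D ≅ C × D`
  let Φ : (↥C × ↥D) →ₗ[R] M := (C.subtype).coprod (u.comp D.subtype)
  have hΦrange : LinearMap.range Φ = D := by
    rw [LinearMap.range_coprod, Submodule.range_subtype, LinearMap.range_comp,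
      Submodule.range_subtype]
    exact hDsplit.symm
  have hΦinj : Function.Injective Φ := by
    rw [← LinearMap.ker_eq_bot, eq_bot_iff]
    rintro ⟨cx, dx⟩ hk
    rw [LinearMap.mem_ker] at hk
    have hk' : (↑cx : M) + u ↑dx = 0 := hk
    have hcu : u ↑dx ∈ Submodule.map u D := Submodule.mem_map_of_mem dx.2
    have hcC : u ↑dx ∈ C := by
      have hne : (↑cx : M) = -(u ↑dx) := eq_neg_of_add_eq_zero_left hk'
      have := cx.2
      rw [hne] at this
      simpa using C.neg_mem this
    have hu0 : u ↑dx = 0 := hdisjCD _ hcC hcu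
    have hd0 : (↑dx : M) = 0 := hu (by rwa [map_zero])
    have hc0 : (↑cx : M) = 0 := by rwa [hu0, add_zero] at hk'
    rw [Submodule.mem_bot]
    exact Prod.ext (Subtype.ext hc0) (Subtype.ext hd0)
  let eCD : (↥C × ↥D) ≃ₗ[R] ↥D :=
    (LinearEquiv.ofInjective Φ hΦinj).trans (LinearEquiv.ofEq _ _ hΦrange)
  -- transport into `↥N₀`
  let D' : Submodule R M := Submodule.map u D
  have hD'le : D' ≤ N₀ := hmapuDN
  let eDD' : ↥D ≃ₗ[R] ↥D' := Submodule.equivMapOfInjective u hu D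
  let D'' : Submodule R ↥N₀ := Submodule.comap N₀.subtype D'
  have hD''le : Submodule.map N₀.subtype D'' = D' := by
    rw [Submodule.map_comap_eq, Submodule.range_subtype]
    exact inf_eq_right.mpr hD'le
  let eD''D' : ↥D'' ≃ₗ[R] ↥D' := Submodule.comapSubtypeEquivOfLe hD'le
  -- maximal essential extension of `D''` in the injective module `↥N₀`
  obtain ⟨E, F, hessDE, hEinj, hcomplEF⟩ := exists_injective_ess_ext hN₀inj D''
  let A : Submodule R ↥E := Submodule.comap E.subtype D''
  have essA : EssTop A := essTop_comap hessDE
  let eAD'' : ↥A ≃ₗ[R] ↥D'' := Submodule.comapSubtypeEquivOfLe hessDE.1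
  -- `A ≅ D ≅ C × D ≅ C × A`
  let eX : ↥A ≃ₗ[R] ↥D := (eAD''.trans eD''D').trans eDD'.symm
  let eA : ↥A ≃ₗ[R] (↥C × ↥A) :=
    (eX.trans eCD.symm).trans ((LinearEquiv.refl R ↥C).prodCongr eX.symm)
  -- uniqueness of injective hulls: `E ≅ C × E`
  let A' : Submodule R (↥C × ↥E) := (⊤ : Submodule R ↥C).prod A
  have essA' : EssTop A' := essTop_prod_top essA
  obtain ⟨eE⟩ := hull_unique hEinj (inj_prod hCinj hEinj) A A' essA essA'
    (eA.trans (prodTopEquiv A).symm)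
  -- assemble everything
  let eQ : (↥E × ↥F) ≃ₗ[R] ↥N₀ := Submodule.prodEquivOfIsCompl E F hcomplEF
  let eMs : (↥N₀ × ↥C) ≃ₗ[R] M := Submodule.prodEquivOfIsCompl N₀ C hcompl
  let big : ↥N₀ ≃ₗ[R] M :=
    eQ.symm.trans ((eE.prodCongr (LinearEquiv.refl R ↥F)).trans
      ((LinearEquiv.prodAssoc R ↥C ↥E ↥F).trans
        (((LinearEquiv.refl R ↥C).prodCongr eQ).trans
          ((LinearEquiv.prodComm R ↥C ↥N₀).trans eMs))))
  exact ⟨big.symm.trans (LinearEquiv.ofInjective g hg).symm⟩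
end

section
/- Let R be a ring. R is left noetherian if and only if every direct sum of injective left R-modules is injective. -/
universe u

open CategoryTheory in
private lemma CEBP.exists_injective_embedding {R : Type u} [Ring R] (Q : Type u) [AddCommGroup Q] [Module R Q] :
    ∃ (E : Type u) (_ : AddCommGroup E) (_ : Module R E) (f : Q →ₗ[R] E),
      Module.Injective R E ∧ Function.Injective f := by
  let J := Injective.under (ModuleCat.of R Q)
  have hJ : CategoryTheory.Injective (ModuleCat.of R J) := by
    show CategoryTheory.Injective J; infer_instance
  refine ⟨J, inferInstance, inferInstance, (Injective.ι (ModuleCat.of R Q)).hom, ?_, ?_⟩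
  · exact Module.injective_module_of_injective_object R J
  · exact (ModuleCat.mono_iff_injective _).mp (Injective.ι_mono _)


private theorem CEBP.forward (R : Type u) [Ring R] (hR : IsNoetherianRing R)
    (ι : Type u) (M : ι → Type u) [∀ i, AddCommGroup (M i)] [∀ i, Module R (M i)]
    (hM : ∀ i, Module.Injective R (M i)) : Module.Injective R (Π₀ i, M i) := by
  classical
  apply Module.Baer.injective
  intro J g
  obtain ⟨s, hs⟩ := (IsNoetherian.noetherian J : J.FG)
  have hmem : ∀ x ∈ s, x ∈ J := fun x hx => hs ▸ Submodule.subset_span hx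
  set T : Finset ι :=
    s.attach.sup (fun x : {x // x ∈ s} => (g ⟨x.1, hmem x.1 x.2⟩).support) with hT
  have hsupp : ∀ (y : J) (i : ι), i ∉ T → g y i = 0 := by
    intro y i hi
    set φ : J →ₗ[R] M i := DFinsupp.lapply i ∘ₗ g with hφ
    have hker : Submodule.span R (s : Set R) ≤ (LinearMap.ker φ).map J.subtype := by
      apply Submodule.span_le.mpr
      intro z hz
      refine ⟨⟨z, hmem z hz⟩, ?_, rfl⟩
      have hsub : (g ⟨z, hmem z hz⟩).support ≤ T :=
        Finset.le_sup (f := fun x : {x // x ∈ s} => (g ⟨x.1, hmem x.1 x.2⟩).support)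
          (Finset.mem_attach s ⟨z, hz⟩)
      have : i ∉ (g ⟨z, hmem z hz⟩).support := fun h => hi (hsub h)
      simpa [φ] using DFinsupp.notMem_support_iff.mp this
    have hy : y.1 ∈ (LinearMap.ker φ).map J.subtype := hker (hs ▸ y.2)
    obtain ⟨z, hz, hzy⟩ := hy
    have : φ y = 0 := by
      have : z = y := Subtype.ext hzy
      rw [← this]; exact hz
    simpa [φ] using this
  have hBaer : ∀ i, Module.Baer R (M i) := fun i => Module.Baer.of_injective (hM i)
  choose G hG using fun i => hBaer i J (DFinsupp.lapply i ∘ₗ g)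
  refine ⟨∑ i ∈ T, (DFinsupp.lsingle i) ∘ₗ G i, fun x hx => ?_⟩
  have : (∑ i ∈ T, (DFinsupp.lsingle i) ∘ₗ G i) x
      = ∑ i ∈ T, DFinsupp.single i (G i x) := by
    simp [LinearMap.sum_apply]
  rw [this]
  ext j
  rw [DFinsupp.finset_sum_apply]
  by_cases hj : j ∈ T
  · rw [Finset.sum_eq_single j (fun b _ hb => DFinsupp.single_eq_of_ne hb.symm)
      (fun h => absurd hj h), DFinsupp.single_eq_same]
    simpa using hG j x hx
  · rw [Finset.sum_eq_zero (fun b hb => DFinsupp.single_eq_of_ne (Ne.symm (fun h : b = j => hj (h ▸ hb)))),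
      hsupp ⟨x, hx⟩ j hj]

private theorem CEBP.backward (R : Type u) [Ring R]
    (H : ∀ (I : Type u) (M : I → Type u) [∀ i, AddCommGroup (M i)] [∀ i, Module R (M i)],
      (∀ i, Module.Injective R (M i)) → Module.Injective R (Π₀ i, M i)) :
    IsNoetherianRing R := by
  classical
  rw [isNoetherianRing_iff, ← monotone_stabilizes_iff_noetherian]
  intro c
  obtain ⟨E, iA, iM, e, hEinj, heinj⟩ :
      ∃ (E : ℕ → Type u) (_ : ∀ n, AddCommGroup (E n)) (_ : ∀ n, Module R (E n))
        (e : ∀ n, (R ⧸ c n) →ₗ[R] E n),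
        (∀ n, Module.Injective R (E n)) ∧ (∀ n, Function.Injective (e n)) := by
    choose E iA iM e h1 h2 using fun n : ℕ => CEBP.exists_injective_embedding (R := R) (R ⧸ c n)
    exact ⟨E, iA, iM, e, h1, h2⟩
  set M : ULift.{u} ℕ → Type u := fun i => E i.down with hM
  have hDinj : Module.Injective R (Π₀ i, M i) := H (ULift ℕ) M (fun i => hEinj i.down)
  -- the big ideal
  set I : Ideal R := ⨆ n, c n with hI
  -- the pi-valued map
  set P : R →ₗ[R] (∀ i : ULift.{u} ℕ, M i) :=
    LinearMap.pi (fun i => e i.down ∘ₗ (c i.down).mkQ) with hP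
  have hPev : ∀ (x : R) (N : ℕ), x ∈ c N → ∀ i : ULift ℕ, N ≤ i.down → P x i = 0 := by
    intro x N hx i hi
    have : ((c i.down).mkQ) x = 0 := (Submodule.Quotient.mk_eq_zero _).mpr (c.monotone hi hx)
    simp [hP, LinearMap.pi_apply, this]
  -- dfinsupp valued function
  have hex : ∀ x : I, ∃ N : ℕ, x.1 ∈ c N := fun x => (Submodule.mem_iSup_of_chain c x.1).mp x.2
  let mkD : (x : I) → (Π₀ i, M i) := fun x =>
    ⟨fun i => P x.1 i, Trunc.mk ⟨((Finset.range (hex x).choose).map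
        (Equiv.ulift.symm.toEmbedding)).val, by
      intro i
      by_cases hi : i.down < (hex x).choose
      · left
        simp only [Finset.mem_val, Finset.mem_map, Finset.mem_range]
        exact ⟨i.down, hi, rfl⟩
      · right
        exact hPev x.1 _ (hex x).choose_spec i (not_lt.mp hi)⟩⟩
  have mkD_apply : ∀ (x : I) (i : ULift ℕ), mkD x i = P x.1 i := fun _ _ => rfl
  let g : I →ₗ[R] (Π₀ i, M i) :=
    { toFun := mkD
      map_add' := fun x y => by
        ext i; simp [mkD_apply, map_add]
      map_smul' := fun r x => by
        ext i
        simp only [mkD_apply, RingHom.id_apply, DFinsupp.smul_apply, Submodule.coe_smul,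
          smul_eq_mul]
        rw [← smul_eq_mul, map_smul]
        rfl }
  obtain ⟨G, hG⟩ := Module.Baer.of_injective hDinj I g
  -- bound on support of G 1
  obtain ⟨N, hN⟩ : ∃ N : ℕ, ∀ i : ULift.{u} ℕ, N ≤ i.down → (G 1) i = 0 := by
    obtain ⟨N, hN⟩ := Finset.exists_nat_subset_range ((G 1).support.image (fun i => i.down))
    refine ⟨N, fun i hi => ?_⟩
    by_contra h
    have : i ∈ (G 1).support := DFinsupp.mem_support_iff.mpr h
    have : i.down ∈ Finset.range N := hN (Finset.mem_image_of_mem _ this)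
    exact absurd (Finset.mem_range.mp this) (not_lt.mpr hi)
  -- I ≤ c N
  have hIle : I ≤ c N := by
    intro x hx
    have h1 : G x = g ⟨x, hx⟩ := hG x hx
    have h2 : G x = x • G 1 := by rw [← map_smul, smul_eq_mul, mul_one]
    have h3 : g ⟨x, hx⟩ (ULift.up N) = 0 := by
      rw [← h1, h2, DFinsupp.smul_apply, hN (ULift.up N) (le_refl N), smul_zero]
    have h4 : e N (((c N).mkQ) x) = 0 := h3
    have h5 : ((c N).mkQ) x = 0 := heinj N (by rw [h4, map_zero])
    exact (Submodule.Quotient.mk_eq_zero _).mp h5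
  exact ⟨N, fun m hm => le_antisymm (c.monotone hm) ((le_iSup c m).trans hIle)⟩


/-- Cartan–Eilenberg–Bass–Papp: a ring is left noetherian iff every direct sum of
injective left modules is injective. -/
theorem noetherian_iff_directSum_injective (R : Type u) [Ring R] :
    IsNoetherianRing R ↔
      ∀ (I : Type u) (M : I → Type u) [∀ i, AddCommGroup (M i)] [∀ i, Module R (M i)],
        (∀ i, Module.Injective R (M i)) → Module.Injective R (Π₀ i, M i) := by
  exact ⟨fun h => CEBP.forward R h, fun h => CEBP.backward R h⟩
end

section
/- Let R be a ring. R is left noetherian if and only if every absolutely pure left R-module is injective. -/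
universe u

open CategoryTheory DirectSum

section Aux

variable {R : Type u} [Ring R]

/-- A direct sum of injective modules is "absolutely pure". -/
lemma AbsPureAux.directSum_pure (E : ℕ → Type u) [∀ n, AddCommGroup (E n)]
    [∀ n, Module R (E n)] (hE : ∀ n, Module.Injective R (E n))
    (N : Type u) [AddCommGroup N] [Module R N] (g : (⨁ n, E n) →ₗ[R] N)
    (hg : Function.Injective g)
    (m k : ℕ) (a : Fin m → Fin k → R) (b : Fin m → ⨁ n, E n)
    (hsol : ∃ x : Fin k → N, ∀ i, ∑ j, a i j • x j = g (b i)) :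
    ∃ x : Fin k → ⨁ n, E n, ∀ i, ∑ j, a i j • x j = b i := by
  classical
  obtain ⟨x, hx⟩ := hsol
  choose π hπ using fun n => (hE n).out g hg (DirectSum.component R ℕ E n)
  set S : Finset ℕ := Finset.univ.biUnion (fun i => (b i).support) with hS
  refine ⟨fun j => ∑ n ∈ S, DirectSum.lof R ℕ E n (π n (x j)), fun i => ?_⟩
  refine DFinsupp.ext fun t => ?_
  rw [DFinsupp.finset_sum_apply]
  by_cases ht : t ∈ S
  · have happ : ∀ j, (∑ n ∈ S, DirectSum.lof R ℕ E n (π n (x j))) t = π t (x j) := by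
      intro j
      rw [DFinsupp.finset_sum_apply]
      rw [Finset.sum_eq_single t]
      · exact DirectSum.lof_apply R t _
      · intro n _ hn
        exact DFinsupp.single_eq_of_ne (Ne.symm hn)
      · intro h; exact absurd ht h
    calc ∑ j, (a i j • ∑ n ∈ S, DirectSum.lof R ℕ E n (π n (x j))) t
        = ∑ j, a i j • π t (x j) := by
          refine Finset.sum_congr rfl fun j _ => ?_
          rw [DFinsupp.smul_apply, happ j]
      _ = π t (∑ j, a i j • x j) := by rw [map_sum]; simp [map_smul]
      _ = π t (g (b i)) := by rw [hx i]
      _ = DirectSum.component R ℕ E t (b i) := hπ t (b i)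
      _ = b i t := rfl
  · have happ : ∀ j, (∑ n ∈ S, DirectSum.lof R ℕ E n (π n (x j))) t = 0 := by
      intro j
      rw [DFinsupp.finset_sum_apply]
      refine Finset.sum_eq_zero fun n hn => ?_
      exact DFinsupp.single_eq_of_ne (fun h => ht (h ▸ hn))
    have hbt : b i t = 0 := by
      rw [← DFinsupp.notMem_support_iff]
      intro hmem
      exact ht (Finset.mem_biUnion.mpr ⟨i, Finset.mem_univ i, hmem⟩)
    rw [hbt]
    refine Finset.sum_eq_zero fun j _ => ?_
    rw [DFinsupp.smul_apply, happ j, smul_zero]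

/-- Forward direction: over a noetherian ring, absolutely pure modules are injective. -/
lemma AbsPureAux.injective_of_pure [IsNoetherianRing R]
    (M : Type u) [AddCommGroup M] [Module R M]
    (pur : ∀ (N : Type u) [AddCommGroup N] [Module R N] (f : M →ₗ[R] N),
          Function.Injective f →
          ∀ (m k : ℕ) (a : Fin m → Fin k → R) (b : Fin m → M),
            (∃ x : Fin k → N, ∀ i, ∑ j, a i j • x j = f (b i)) →
            (∃ x : Fin k → M, ∀ i, ∑ j, a i j • x j = b i)) :
    Module.Injective R M := by
  classical
  letI : EnoughInjectives (ModuleCat.{u} R) := ModuleCat.enoughInjectives.{u, u} R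
  apply Module.Baer.injective
  intro I g
  obtain ⟨s, hs⟩ := IsNoetherian.noetherian I
  subst hs
  set NN := Injective.under (ModuleCat.of R M) with hNN
  let ιM : M →ₗ[R] NN := (Injective.ι (ModuleCat.of R M)).hom
  have hιM : Function.Injective ιM := (ModuleCat.mono_iff_injective (Injective.ι (ModuleCat.of R M))).mp inferInstance
  haveI hNinj : Module.Injective R ↥NN :=
    Module.injective_module_of_injective_object R ↥NN
      (inj := inferInstanceAs (CategoryTheory.Injective NN))
  obtain ⟨ψ, hψ⟩ := hNinj.out (Submodule.span R (↑s : Set R)).subtype Subtype.val_injective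
    (ιM ∘ₗ g)
  let v : Fin s.card → R := fun i => (s.equivFin.symm i : R)
  have hv : ∀ i, v i ∈ Submodule.span R (↑s : Set R) := fun i =>
    Submodule.subset_span (s.equivFin.symm i).2
  obtain ⟨x, hx⟩ := pur ↥NN ιM hιM s.card 1 (fun i _ => v i) (fun i => g ⟨v i, hv i⟩)
    ⟨fun _ => ψ 1, by
      intro i
      rw [Fin.sum_univ_one]
      have : v i • ψ 1 = ψ (v i) := by rw [← map_smul, smul_eq_mul, mul_one]
      rw [this]
      exact hψ ⟨v i, hv i⟩⟩
  have hx' : ∀ i, v i • x 0 = g ⟨v i, hv i⟩ := by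
    intro i
    have := hx i
    rwa [Fin.sum_univ_one] at this
  refine ⟨LinearMap.toSpanSingleton R M (x 0), fun r hr => ?_⟩
  show r • x 0 = g ⟨r, hr⟩
  induction hr using Submodule.span_induction with
  | mem y h =>
    obtain ⟨i, hi⟩ : ∃ i, v i = y := ⟨s.equivFin ⟨y, h⟩, by simp [v]⟩
    subst hi
    exact hx' i
  | zero => rw [zero_smul]; exact (map_zero g).symm
  | add y z hy hz ihy ihz =>
    rw [add_smul, ihy, ihz]
    exact (map_add g ⟨y, hy⟩ ⟨z, hz⟩).symm
  | smul r y hy ih =>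
    rw [smul_assoc, ih]
    exact (map_smul g r ⟨y, hy⟩).symm

/-- Reverse direction: chains of ideals stabilize. -/
lemma AbsPureAux.stabilizes
    (H : ∀ (M : Type u) [AddCommGroup M] [Module R M],
        (∀ (N : Type u) [AddCommGroup N] [Module R N] (f : M →ₗ[R] N),
          Function.Injective f →
          ∀ (m k : ℕ) (a : Fin m → Fin k → R) (b : Fin m → M),
            (∃ x : Fin k → N, ∀ i, ∑ j, a i j • x j = f (b i)) →
            (∃ x : Fin k → M, ∀ i, ∑ j, a i j • x j = b i)) →
        Module.Injective R M)
    (f : ℕ →o Submodule R R) : ∃ n, ∀ m, n ≤ m → f n = f m := by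
  classical
  letI : EnoughInjectives (ModuleCat.{u} R) := ModuleCat.enoughInjectives.{u, u} R
  set E : ℕ → ModuleCat.{u} R := fun n => Injective.under (ModuleCat.of R (R ⧸ f n)) with hE
  have hEinj : ∀ n, Module.Injective R ↥(E n) := fun n =>
    Module.injective_module_of_injective_object R ↥(E n)
      (inj := inferInstanceAs (CategoryTheory.Injective (E n)))
  let ι : ∀ n, (R ⧸ f n) →ₗ[R] E n := fun n => (Injective.ι (ModuleCat.of R (R ⧸ f n))).hom
  have hι : ∀ n, Function.Injective (ι n) := fun n =>
    (ModuleCat.mono_iff_injective (Injective.ι (ModuleCat.of R (R ⧸ f n)))).mp inferInstance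
  set I : Submodule R R := ⨆ n, f n with hI
  have hm : ∀ a : ↥I, ∃ m, (a : R) ∈ f m := fun a =>
    (Submodule.mem_iSup_of_chain f _).mp a.2
  have supp : ∀ a : ↥I, ∀ n, n ∈ Multiset.range (hm a).choose ∨
      ι n (Submodule.Quotient.mk (a : R)) = 0 := by
    intro a n
    by_cases h : n < (hm a).choose
    · exact Or.inl (Multiset.mem_range.mpr h)
    · right
      have hmem : (a : R) ∈ f n := f.monotone (le_of_not_gt h) (hm a).choose_spec
      rw [(Submodule.Quotient.mk_eq_zero _).mpr hmem, map_zero]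
  let φ : ↥I →ₗ[R] ⨁ n, ↥(E n) :=
    { toFun := fun a => ⟨fun n => ι n (Submodule.Quotient.mk (a : R)),
        Trunc.mk ⟨Multiset.range (hm a).choose, supp a⟩⟩
      map_add' := fun a b => DFinsupp.ext fun n => by
        rw [DFinsupp.add_apply]
        show ι n (Submodule.Quotient.mk ((a : R) + (b : R))) =
          ι n (Submodule.Quotient.mk (a : R)) + ι n (Submodule.Quotient.mk (b : R))
        rw [Submodule.Quotient.mk_add, map_add]
      map_smul' := fun r a => DFinsupp.ext fun n => by
        rw [DFinsupp.smul_apply]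
        show ι n (Submodule.Quotient.mk (r • (a : R))) =
          r • ι n (Submodule.Quotient.mk (a : R))
        rw [Submodule.Quotient.mk_smul, map_smul] }
  have hinj : Module.Injective R (⨁ n, ↥(E n)) :=
    H (⨁ n, ↥(E n)) (fun N _ _ g hg m k a b hsol =>
      AbsPureAux.directSum_pure (fun n => ↥(E n)) hEinj N g hg m k a b hsol)
  obtain ⟨ψ, hψ⟩ := hinj.out I.subtype Subtype.val_injective φ
  set e : ⨁ n, ↥(E n) := ψ 1 with he
  have hφe : ∀ a : ↥I, φ a = (a : R) • e := by
    intro a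
    rw [← hψ a]
    show ψ (a : R) = (a : R) • ψ 1
    rw [← map_smul, smul_eq_mul, mul_one]
  set n₀ : ℕ := (e.support.sup id) + 1 with hn₀
  have hen : ∀ n, n₀ ≤ n → e n = 0 := by
    intro n hn
    rw [← DFinsupp.notMem_support_iff]
    intro hmem
    have : n ≤ e.support.sup id := Finset.le_sup (f := id) hmem
    omega
  refine ⟨n₀, fun m hm' => le_antisymm (f.monotone hm') ?_⟩
  intro a ha
  have haI : a ∈ I := by rw [hI]; exact le_iSup f m ha
  have h1 : (φ ⟨a, haI⟩) n₀ = ι n₀ (Submodule.Quotient.mk a) := rfl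
  have h2 : (φ ⟨a, haI⟩) n₀ = 0 := by
    rw [hφe ⟨a, haI⟩, DFinsupp.smul_apply, hen n₀ le_rfl, smul_zero]
  have h3 : ι n₀ (Submodule.Quotient.mk a) = ι n₀ 0 := by rw [map_zero, ← h1, h2]
  have h4 : (Submodule.Quotient.mk a : R ⧸ f n₀) = 0 := hι n₀ h3
  exact (Submodule.Quotient.mk_eq_zero _).mp h4

end Aux

/-- A ring is left noetherian iff every absolutely pure left module is injective. -/
theorem noetherian_iff_absolutelyPure_injective (R : Type u) [Ring R] :
    IsNoetherianRing R ↔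
      ∀ (M : Type u) [AddCommGroup M] [Module R M],
        (∀ (N : Type u) [AddCommGroup N] [Module R N] (f : M →ₗ[R] N),
          Function.Injective f →
          ∀ (m k : ℕ) (a : Fin m → Fin k → R) (b : Fin m → M),
            (∃ x : Fin k → N, ∀ i, ∑ j, a i j • x j = f (b i)) →
            (∃ x : Fin k → M, ∀ i, ∑ j, a i j • x j = b i)) →
        Module.Injective R M := by
  constructor
  · intro h M _ _ pur
    exact AbsPureAux.injective_of_pure M pur
  · intro H
    rw [isNoetherianRing_iff, ← monotone_stabilizes_iff_noetherian]
    exact fun f => AbsPureAux.stabilizes H f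
end

section
/- Let R be a left noetherian ring and {M_i : i ∈ I} a directed system of injective left R-modules with injective transition maps (e.g., an increasing chain of injective submodules of a fixed module). Then the union (direct limit) of the M_i is injective. -/
universe u

/-- Over a left noetherian ring, a direct limit of a directed system of injective modules
with injective transition maps is injective. -/
theorem directLimit_injective_of_noetherian (R : Type u) [Ring R]
    (hR : IsNoetherianRing R)
    (ι : Type u) [Preorder ι] [IsDirected ι (· ≤ ·)] [DecidableEq ι] [Nonempty ι]
    (G : ι → Type u) [∀ i, AddCommGroup (G i)] [∀ i, Module R (G i)]
    (f : ∀ i j, i ≤ j → G i →ₗ[R] G j)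
    [DirectedSystem G fun i j h => f i j h]
    (hinj : ∀ i, Module.Injective R (G i))
    (hmono : ∀ i j (h : i ≤ j), Function.Injective (f i j h)) :
    Module.Injective R (Module.DirectLimit G f) := by
  -- injectivity of the canonical maps into the limit
  have of_inj : ∀ i, Function.Injective (Module.DirectLimit.of R ι G f i) := by
    intro i x y hxy
    rw [← sub_eq_zero, ← map_sub] at hxy
    obtain ⟨j, hij, hj⟩ := Module.DirectLimit.of.zero_exact hxy
    rw [← sub_eq_zero]
    exact hmono i j hij (by simpa using hj)
  apply Module.Baer.injective
  intro I g
  -- I is finitely generated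
  obtain ⟨s, hs⟩ := (isNoetherian_def.mp hR I)
  -- each generator's image comes from some stage; pick a common stage
  have hex : ∀ x : ↥I, ∃ i y, Module.DirectLimit.of R ι G f i y = g x :=
    fun x => Module.DirectLimit.exists_of (g x)
  choose idx elt helt using hex
  have hmem : ∀ x ∈ s, x ∈ I := fun x hx => hs ▸ Submodule.subset_span hx
  have Hfin := Finset.exists_le (s.attach.image fun x => idx ⟨x.1, hmem x.1 x.2⟩)
  obtain ⟨i0, hi0⟩ := Hfin
  -- the image of g lies in the range of `of i0`
  set L := LinearMap.range (Module.DirectLimit.of R ι G f i0) with hL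
  have hrange : ∀ x : ↥I, g x ∈ L := by
    have hq : Submodule.map I.subtype (Submodule.comap g L) = I := by
      apply le_antisymm (Submodule.map_subtype_le _ _)
      conv_lhs => rw [← hs]
      rw [Submodule.span_le]
      intro z hz
      have hzI : z ∈ I := hmem z hz
      refine ⟨⟨z, hzI⟩, ?_, rfl⟩
      -- g ⟨z, hzI⟩ ∈ L
      have : idx ⟨z, hzI⟩ ≤ i0 := by
        apply hi0
        exact Finset.mem_image.mpr ⟨⟨z, hz⟩, Finset.mem_attach _ _, rfl⟩
      refine ⟨f _ i0 this (elt ⟨z, hzI⟩), ?_⟩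
      rw [Module.DirectLimit.of_f, helt]
    intro x
    have : Submodule.comap g L = ⊤ := by
      apply Submodule.map_injective_of_injective (Submodule.injective_subtype I)
      rw [hq, Submodule.map_subtype_top]
    have hx : x ∈ Submodule.comap g L := this.symm ▸ Submodule.mem_top
    exact hx
  -- factor g through G i0
  let e := LinearEquiv.ofInjective _ (of_inj i0)
  let h : ↥I →ₗ[R] G i0 := e.symm.toLinearMap ∘ₗ LinearMap.codRestrict L g hrange
  obtain ⟨h', hh'⟩ := (hinj i0).out I.subtype (Submodule.injective_subtype I) h
  refine ⟨(Module.DirectLimit.of R ι G f i0) ∘ₗ h', fun x hx => ?_⟩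
  have : h' x = h ⟨x, hx⟩ := hh' ⟨x, hx⟩
  simp only [LinearMap.comp_apply, this, h]
  exact congrArg Subtype.val (e.apply_symm_apply (LinearMap.codRestrict L g hrange ⟨x, hx⟩))
end

section
/- Let R be a ring, N a left R-module such that N^(ℕ) is pure-injective, and M a pure submodule of N. Then M^(ℕ) is pure-injective. -/
open Cardinal

universe u v

def IsPureMap (R : Type u) [Ring R] {M N : Type v}
    [AddCommGroup M] [Module R M] [AddCommGroup N] [Module R N]
    (f : M →ₗ[R] N) : Prop :=
  ∀ (m k : ℕ) (a : Fin m → Fin k → R) (b : Fin m → M),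
    (∃ x : Fin k → N, ∀ i, ∑ j, a i j • x j = f (b i)) →
    (∃ x : Fin k → M, ∀ i, ∑ j, a i j • x j = b i)

def PureInjective (R : Type u) [Ring R] (M : Type v) [AddCommGroup M] [Module R M] : Prop :=
  ∀ (N : Type v) [AddCommGroup N] [Module R N], ∀ f : M →ₗ[R] N,
    Function.Injective f → IsPureMap R f → ∃ g : N →ₗ[R] M, g ∘ₗ f = LinearMap.id

open Finsupp

section PPF
variable (R : Type u) [Ring R]

/-- A (matrix form) pp formula in one free variable. -/
structure PPF where
  m : ℕ
  k : ℕ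
  a : Fin m → Fin k → R
  c : Fin m → R

variable {R}

/-- The solution set of a pp formula in a module. -/
def PPF.sol (φ : PPF R) (X : Type v) [AddCommGroup X] [Module R X] : Set X :=
  {x | ∃ y : Fin φ.k → X, ∀ i, ∑ j, φ.a i j • y j = φ.c i • x}

variable {X : Type v} [AddCommGroup X] [Module R X]
variable {Y : Type*} [AddCommGroup Y] [Module R Y]

theorem PPF.zero_mem_sol (φ : PPF R) : (0 : X) ∈ φ.sol X :=
  ⟨0, fun i => by simp⟩

theorem PPF.add_mem_sol (φ : PPF R) {x x' : X} (hx : x ∈ φ.sol X) (hx' : x' ∈ φ.sol X) :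
    x + x' ∈ φ.sol X := by
  obtain ⟨y, hy⟩ := hx; obtain ⟨y', hy'⟩ := hx'
  exact ⟨y + y', fun i => by simp [smul_add, Finset.sum_add_distrib, hy i, hy' i]⟩

theorem PPF.neg_mem_sol (φ : PPF R) {x : X} (hx : x ∈ φ.sol X) : -x ∈ φ.sol X := by
  obtain ⟨y, hy⟩ := hx
  exact ⟨-y, fun i => by simp only [Pi.neg_apply, smul_neg]; rw [Finset.sum_neg_distrib, hy i]⟩

theorem PPF.sub_mem_sol (φ : PPF R) {x x' : X} (hx : x ∈ φ.sol X) (hx' : x' ∈ φ.sol X) :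
    x - x' ∈ φ.sol X := by
  rw [sub_eq_add_neg]; exact φ.add_mem_sol hx (φ.neg_mem_sol hx')

theorem PPF.map_mem_sol (φ : PPF R) (g : X →ₗ[R] Y) {x : X} (hx : x ∈ φ.sol X) :
    g x ∈ φ.sol Y := by
  obtain ⟨y, hy⟩ := hx
  refine ⟨fun j => g (y j), fun i => ?_⟩
  rw [← map_smul]
  simp only [← map_smul, ← map_sum, hy i]

end PPF

section Systems
variable (R : Type u) [Ring R]
variable (X : Type v) [AddCommGroup X] [Module R X]

/-- A linear equation over variables `V` with a parameter in `X`: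
a finitely supported coefficient vector together with a right hand side. -/
abbrev Eqn (V : Type*) := (V →₀ R) × X

variable {R X}

/-- `y` solves all equations in `Y`. -/
def SolvOn {V : Type*} (Y : Set (Eqn R X V)) (y : V → X) : Prop :=
  ∀ e ∈ Y, Finsupp.linearCombination R y e.1 = e.2

/-- Every finite subsystem of `Y` is solvable. -/
def FinSolv {V : Type*} (Y : Set (Eqn R X V)) : Prop :=
  ∀ c : Finset (Eqn R X V), ↑c ⊆ Y → ∃ y : V → X, SolvOn (↑c : Set (Eqn R X V)) y

variable (R)

/-- Algebraic compactness: every finitely solvable system of linear equations is solvable. -/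
def AlgCompact (X : Type u) [AddCommGroup X] [Module R X] : Prop :=
  ∀ (V : Type u) (Y : Set (Eqn R X V)), FinSolv Y → ∃ y : V → X, SolvOn Y y

end Systems

section LemmaA
variable {R : Type u} [Ring R]
variable {X : Type u} [AddCommGroup X] [Module R X]

theorem AlgCompact.of_pureInjective (hPI : PureInjective R X) : AlgCompact R X := by
  intro V Y hfs
  classical
  -- the auxiliary module
  set gen : Y → X × (V →₀ R) := fun e => ((e : Eqn R X V).2, -(e : Eqn R X V).1) with hgen
  set K : Submodule R (X × (V →₀ R)) := Submodule.span R (Set.range gen) with hK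
  set ι : X →ₗ[R] (X × (V →₀ R)) ⧸ K := K.mkQ ∘ₗ LinearMap.inl R X (V →₀ R) with hι
  set T : (V → X) → (X × (V →₀ R)) →ₗ[R] X :=
    fun y => LinearMap.coprod LinearMap.id (Finsupp.linearCombination R y) with hT
  have hTkill : ∀ (c : Y →₀ R) (y : V → X),
      (∀ e ∈ c.support, Finsupp.linearCombination R y (e : Eqn R X V).1 = (e : Eqn R X V).2) →
      T y (c.sum fun e r => r • gen e) = 0 := by
    intro c y hy
    rw [map_finsuppSum]
    refine Finset.sum_eq_zero fun e he => ?_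
    show T y (c e • gen e) = 0
    have : T y (gen e) = 0 := by
      simp only [hT, hgen, LinearMap.coprod_apply, LinearMap.id_apply, map_neg]
      rw [hy e he]; abel
    rw [map_smul, this, smul_zero]
  have hinj : Function.Injective ι := by
    rw [injective_iff_map_eq_zero]
    intro x hx
    have hxK : ((x, 0) : X × (V →₀ R)) ∈ K := by
      simpa [hι, Submodule.Quotient.mk_eq_zero] using hx
    rw [hK, Finsupp.mem_span_range_iff_exists_finsupp] at hxK
    obtain ⟨c, hc⟩ := hxK
    obtain ⟨y, hy⟩ := hfs (c.support.image Subtype.val)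
      (by intro e he; simp only [Finset.coe_image, Set.mem_image] at he
          obtain ⟨e', _, rfl⟩ := he; exact e'.2)
    have hy' : ∀ e ∈ c.support, Finsupp.linearCombination R y (e : Eqn R X V).1 = (e : Eqn R X V).2 := by
      intro e he
      exact hy _ (by simp only [Finset.coe_image, Set.mem_image]; exact ⟨e, he, rfl⟩)
    have := hTkill c y hy'
    rw [hc] at this
    simpa [hT] using this
  have hpure : IsPureMap R ι := by
    intro m k a b ⟨x, hx⟩
    choose u hu using fun j => Submodule.mkQ_surjective K (x j)
    have hmem : ∀ i, (∑ j, a i j • u j) - (b i, 0) ∈ K := by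
      intro i
      have h1 : K.mkQ (∑ j, a i j • u j) = ∑ j, a i j • x j := by
        rw [map_sum]; exact Finset.sum_congr rfl fun j _ => by rw [map_smul, hu j]
      have h2 : K.mkQ ((∑ j, a i j • u j) - (b i, 0)) = 0 := by
        rw [map_sub, h1, hx i]
        have : K.mkQ ((b i, 0)) = ι (b i) := rfl
        rw [this, sub_self]
      rwa [Submodule.mkQ_apply, Submodule.Quotient.mk_eq_zero] at h2
    have hmem' : ∀ i, ∃ c : Y →₀ R,
        (c.sum fun e r => r • gen e) = (∑ j, a i j • u j) - (b i, 0) := by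
      intro i
      have := hmem i
      rwa [hK, Finsupp.mem_span_range_iff_exists_finsupp] at this
    choose c hc using hmem'
    obtain ⟨y, hy⟩ := hfs (Finset.univ.biUnion fun i => (c i).support.image Subtype.val)
      (by intro e he
          simp only [Finset.coe_biUnion, Finset.coe_image, Set.mem_iUnion, Set.mem_image,
            Finset.mem_coe] at he
          obtain ⟨i, _, e', _, rfl⟩ := he; exact e'.2)
    refine ⟨fun j => T y (u j), fun i => ?_⟩
    have : ∑ j, a i j • T y (u j) = T y (∑ j, a i j • u j) := by
      rw [map_sum]; exact Finset.sum_congr rfl fun j _ => (map_smul _ _ _).symm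
    rw [this, show (∑ j, a i j • u j) = (b i, (0 : V →₀ R)) + ((∑ j, a i j • u j) - (b i, 0)) by abel,
      map_add, ← hc i, hTkill (c i) y ?_]
    · simp [hT]
    · intro e he
      refine hy _ ?_
      simp only [Finset.coe_biUnion, Finset.coe_image, Set.mem_iUnion, Finset.mem_coe]
      exact ⟨i, Finset.mem_univ i, Set.mem_image_of_mem _ he⟩
  obtain ⟨g, hg⟩ := hPI _ ι hinj hpure
  set Φ : (V →₀ R) →ₗ[R] X := g ∘ₗ K.mkQ ∘ₗ LinearMap.inr R X (V →₀ R) with hΦ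
  refine ⟨fun v => Φ (Finsupp.single v 1), fun e he => ?_⟩
  have hlc : Finsupp.linearCombination R (fun v => Φ (Finsupp.single v 1)) e.1 = Φ e.1 := by
    rw [Finsupp.linearCombination_apply]
    have h1 : (e.1.sum fun v r => r • Φ (Finsupp.single v 1))
        = e.1.sum fun v r => Φ (Finsupp.single v r) :=
      Finsupp.sum_congr fun v _ => by
        show (e.1 v) • Φ (Finsupp.single v 1) = Φ (Finsupp.single v (e.1 v))
        rw [← map_smul, Finsupp.smul_single, smul_eq_mul, mul_one]
    rw [h1, ← map_finsuppSum, Finsupp.sum_single]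
  rw [hlc]
  have hKe : ((e.2, 0) : X × (V →₀ R)) - (0, e.1) ∈ K := by
    have : ((e.2, 0) : X × (V →₀ R)) - (0, e.1) = gen ⟨e, he⟩ := by
      simp [hgen, Prod.ext_iff]
    rw [this]
    exact Submodule.subset_span (Set.mem_range_self _)
  have : Φ e.1 = g (ι e.2) := by
    simp only [hΦ, hι, LinearMap.comp_apply]
    congr 1
    rw [← sub_eq_zero, ← map_sub, Submodule.mkQ_apply, Submodule.Quotient.mk_eq_zero]
    simpa using (K.neg_mem hKe)
  rw [this, ← LinearMap.comp_apply, hg, LinearMap.id_apply]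
end LemmaA

section Matrixize
variable {R : Type u} [Ring R]
variable {X : Type v} [AddCommGroup X] [Module R X]

/-- Core matrixization lemma: summing a row over an enumerated finite variable set
computes the linear combination. -/
theorem sum_row_eq_lc {V : Type*} (vs : Finset V) (w : V →₀ R) (hw : w.support ⊆ vs)
    (y : V → X) :
    ∑ j : Fin vs.card, w (vs.equivFin.symm j : V) • y (vs.equivFin.symm j : V)
      = Finsupp.linearCombination R y w := by
  classical
  have h1 : ∑ j : Fin vs.card, w (vs.equivFin.symm j : V) • y (vs.equivFin.symm j : V)
      = ∑ v : {x // x ∈ vs}, w (v : V) • y (v : V) :=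
    Equiv.sum_comp vs.equivFin.symm (fun v : {x // x ∈ vs} => w (v : V) • y (v : V))
  rw [Finsupp.linearCombination_apply, Finsupp.sum]
  rw [Finset.sum_subset hw (fun v _ hv => by rw [Finsupp.notMem_support_iff.mp hv, zero_smul])]
  rw [← Finset.sum_attach vs (fun v => w v • y v)]
  exact h1

/-- A finite system of linear equations with parameters in `Q`, having a solution
in `P` (after applying `h` to the right hand sides), has a solution in `Q`,
whenever `h` is a pure map. -/
theorem IsPureMap.finsolv_transfer {Q P : Type v} [AddCommGroup Q] [Module R Q]
    [AddCommGroup P] [Module R P] {h : Q →ₗ[R] P} (hp : IsPureMap R h)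
    {V : Type*} (c : Finset ((V →₀ R) × Q)) (zP : V → P)
    (hz : ∀ e ∈ c, Finsupp.linearCombination R zP e.1 = h e.2) :
    ∃ y : V → Q, ∀ e ∈ c, Finsupp.linearCombination R y e.1 = e.2 := by
  classical
  set vs : Finset V := c.biUnion fun e => e.1.support with hvs
  have hsupp : ∀ e ∈ c, e.1.support ⊆ vs := fun e he =>
    fun v hv => Finset.mem_biUnion.mpr ⟨e, he, hv⟩
  set ev := vs.equivFin.symm with hev
  set ec := c.equivFin.symm with hec
  set a : Fin c.card → Fin vs.card → R := fun i j => ((ec i : (V →₀ R) × Q).1) (ev j) with ha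
  set b : Fin c.card → Q := fun i => (ec i : (V →₀ R) × Q).2 with hb
  have hsol : ∃ x : Fin vs.card → P, ∀ i, ∑ j, a i j • x j = h (b i) := by
    refine ⟨fun j => zP (ev j), fun i => ?_⟩
    rw [sum_row_eq_lc vs _ (hsupp _ (ec i).2) zP]
    exact hz _ (ec i).2
  obtain ⟨x', hx'⟩ := hp c.card vs.card a b hsol
  set yy : V → Q := fun v => if hv : v ∈ vs then x' (ev.symm ⟨v, hv⟩) else 0 with hyy
  refine ⟨yy, fun e he => ?_⟩
  rw [← sum_row_eq_lc vs _ (hsupp _ he) yy]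
  have this1 := hx' (ec.symm ⟨e, he⟩)
  simp only [ha, hb, Equiv.apply_symm_apply] at this1
  rw [← hev]
  calc ∑ j, e.1 (ev j : V) • yy (ev j : V)
      = ∑ j, e.1 (ev j : V) • x' j := Finset.sum_congr rfl fun j _ => by
        have hmem : (ev j : V) ∈ vs := (ev j).2
        rw [hyy]
        dsimp only
        rw [dif_pos hmem, show (⟨(ev j : V), hmem⟩ : {x // x ∈ vs}) = ev j from Subtype.ext rfl,
          Equiv.symm_apply_apply]
    _ = e.2 := this1

end Matrixize

section LemmaC
variable {R : Type u} [Ring R]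
variable {Q : Type u} [AddCommGroup Q] [Module R Q]

theorem PureInjective.of_algCompact (hAC : AlgCompact R Q) : PureInjective R Q := by
  intro P _ _ h _ hpure
  classical
  set eqn : ((P × P) ⊕ (R × P) ⊕ Q) → Eqn R Q P := fun i =>
    match i with
    | Sum.inl (p, p') =>
        (Finsupp.single p 1 + Finsupp.single p' 1 - Finsupp.single (p + p') 1, 0)
    | Sum.inr (Sum.inl (r, p)) => (Finsupp.single p r - Finsupp.single (r • p) 1, 0)
    | Sum.inr (Sum.inr q) => (Finsupp.single (h q) 1, q)
    with heqn
  have htaut : ∀ i, Finsupp.linearCombination R (id : P → P) (eqn i).1 = h (eqn i).2 := by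
    rintro (⟨p, p'⟩ | ⟨r, p⟩ | q) <;>
      simp [heqn, Finsupp.linearCombination_single]
  have hfs : FinSolv (Set.range eqn) := by
    intro c hc
    refine hpure.finsolv_transfer c (id : P → P) fun e he => ?_
    obtain ⟨i, rfl⟩ := hc he
    exact htaut i
  obtain ⟨y, hy⟩ := hAC P (Set.range eqn) hfs
  have hlc : ∀ i, Finsupp.linearCombination R y (eqn i).1 = (eqn i).2 :=
    fun i => hy (eqn i) (Set.mem_range_self i)
  have hadd : ∀ p p', y (p + p') = y p + y p' := by
    intro p p'
    have := hlc (Sum.inl (p, p'))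
    simp only [heqn, map_add, map_sub, Finsupp.linearCombination_single, one_smul] at this
    linear_combination (norm := abel) -this
  have hsmul : ∀ (r : R) (p : P), y (r • p) = r • y p := by
    intro r p
    have := hlc (Sum.inr (Sum.inl (r, p)))
    simp only [heqn, map_sub, Finsupp.linearCombination_single, one_smul] at this
    linear_combination (norm := abel) -this
  have hretr : ∀ q, y (h q) = q := by
    intro q
    have := hlc (Sum.inr (Sum.inr q))
    simpa [heqn, Finsupp.linearCombination_single] using this
  refine ⟨{ toFun := y, map_add' := hadd, map_smul' := hsmul }, ?_⟩
  exact LinearMap.ext fun q => hretr q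
end LemmaC

section DCC
variable {R : Type u} [Ring R]
variable {X : Type v} [AddCommGroup X] [Module R X]

variable (R X) in
/-- Descending chain condition on pp-definable subgroups. -/
def PPDCC : Prop :=
  ¬ ∃ φ : ℕ → PPF R, ∀ n, (φ (n + 1)).sol X ⊂ (φ n).sol X

theorem PPDCC.exists_min (hdcc : PPDCC R X) (F : Set (PPF R)) (hne : F.Nonempty) :
    ∃ φ ∈ F, ∀ ψ ∈ F, ψ.sol X ⊆ φ.sol X → ψ.sol X = φ.sol X := by
  by_contra hcon
  push_neg at hcon
  have step : ∀ p : {φ // φ ∈ F}, ∃ q : {φ // φ ∈ F}, (q.1.sol X) ⊂ (p.1.sol X) := by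
    intro p
    obtain ⟨ψ, hψF, hsub, hne'⟩ := hcon p.1 p.2
    exact ⟨⟨ψ, hψF⟩, hsub.ssubset_of_ne hne'⟩
  choose stp hstp using step
  obtain ⟨φ₀, hφ₀⟩ := hne
  refine hdcc ⟨fun n => (stp^[n] ⟨φ₀, hφ₀⟩).1, fun n => ?_⟩
  show ((stp^[n + 1] ⟨φ₀, hφ₀⟩ : {φ // φ ∈ F}) : PPF R).sol X ⊂ _
  rw [Function.iterate_succ_apply']
  exact hstp _

/-- The set of values at `v₀` of solutions of the finite system `cs`. -/
def SolSet {V : Type*} (cs : Finset (Eqn R X V)) (v₀ : V) : Set X :=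
  {x | ∃ y : V → X, (∀ e ∈ cs, Finsupp.linearCombination R y e.1 = e.2) ∧ y v₀ = x}

/-- The set of values at `v₀` of solutions of the homogenized system. -/
def HomSolSet {V : Type*} (cs : Finset (Eqn R X V)) (v₀ : V) : Set X :=
  {x | ∃ y : V → X, (∀ e ∈ cs, Finsupp.linearCombination R y e.1 = 0) ∧ y v₀ = x}

theorem lc_add {V : Type*} (y y' : V → X) (w : V →₀ R) :
    Finsupp.linearCombination R (fun v => y v + y' v) w
      = Finsupp.linearCombination R y w + Finsupp.linearCombination R y' w := by
  simp only [Finsupp.linearCombination_apply, Finsupp.sum, smul_add]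
  rw [Finset.sum_add_distrib]

theorem lc_sub {V : Type*} (y y' : V → X) (w : V →₀ R) :
    Finsupp.linearCombination R (fun v => y v - y' v) w
      = Finsupp.linearCombination R y w - Finsupp.linearCombination R y' w := by
  simp only [Finsupp.linearCombination_apply, Finsupp.sum, smul_sub]
  rw [Finset.sum_sub_distrib]

theorem lc_congr {V : Type*} {y y' : V → X} {w : V →₀ R}
    (h : ∀ v ∈ w.support, y v = y' v) :
    Finsupp.linearCombination R y w = Finsupp.linearCombination R y' w := by
  simp only [Finsupp.linearCombination_apply]
  exact Finsupp.sum_congr fun v hv => by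
    show w v • y v = w v • y' v
    rw [h v hv]

theorem SolSet.antitone {V : Type*} {cs cs' : Finset (Eqn R X V)} (h : cs ⊆ cs') (v₀ : V) :
    SolSet cs' v₀ ⊆ SolSet cs v₀ :=
  fun _ ⟨y, hy, hv⟩ => ⟨y, fun e he => hy e (h he), hv⟩

theorem HomSolSet.antitone {V : Type*} {cs cs' : Finset (Eqn R X V)} (h : cs ⊆ cs') (v₀ : V) :
    HomSolSet cs' v₀ ⊆ HomSolSet cs v₀ :=
  fun _ ⟨y, hy, hv⟩ => ⟨y, fun e he => hy e (h he), hv⟩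

theorem SolSet.add_hom {V : Type*} {cs : Finset (Eqn R X V)} {v₀ : V} {x z : X}
    (hx : x ∈ SolSet cs v₀) (hz : z ∈ HomSolSet cs v₀) : x + z ∈ SolSet cs v₀ := by
  obtain ⟨y, hy, hv⟩ := hx
  obtain ⟨y', hy', hv'⟩ := hz
  exact ⟨fun v => y v + y' v, fun e he => by rw [lc_add, hy e he, hy' e he, add_zero],
    by show y v₀ + y' v₀ = x + z; rw [hv, hv']⟩

theorem SolSet.sub_mem_hom {V : Type*} {cs : Finset (Eqn R X V)} {v₀ : V} {x x' : X}
    (hx : x ∈ SolSet cs v₀) (hx' : x' ∈ SolSet cs v₀) : x - x' ∈ HomSolSet cs v₀ := by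
  obtain ⟨y, hy, hv⟩ := hx
  obtain ⟨y', hy', hv'⟩ := hx'
  exact ⟨fun v => y v - y' v, fun e he => by rw [lc_sub, hy e he, hy' e he, sub_self],
    by show y v₀ - y' v₀ = x - x'; rw [hv, hv']⟩

/-- The homogeneous solution-value set of a finite system is pp-definable. -/
theorem exists_ppf_homSolSet {V : Type*} (cs : Finset (Eqn R X V)) (v₀ : V) :
    ∃ φ : PPF R, φ.sol X = HomSolSet cs v₀ := by
  classical
  set vs : Finset V := insert v₀ (cs.biUnion fun e => e.1.support) with hvs
  have hv₀ : v₀ ∈ vs := Finset.mem_insert_self _ _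
  have hsupp : ∀ e ∈ cs, e.1.support ⊆ vs := fun e he v hv =>
    Finset.mem_insert_of_mem (Finset.mem_biUnion.mpr ⟨e, he, hv⟩)
  set ev := vs.equivFin.symm with hev
  set ec := cs.equivFin.symm with hec
  set j₀ : Fin vs.card := vs.equivFin ⟨v₀, hv₀⟩ with hj₀
  refine ⟨⟨cs.card + 1, vs.card,
    Fin.snoc (fun i j => (ec i : Eqn R X V).1 (ev j)) (fun j => if j = j₀ then 1 else 0),
    Fin.snoc (fun _ => 0) 1⟩, ?_⟩
  ext x
  constructor
  · rintro ⟨yh, hyh⟩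
    set y : V → X := fun v => if hv : v ∈ vs then yh (vs.equivFin ⟨v, hv⟩) else 0 with hy
    have hyval : ∀ j : Fin vs.card, y (ev j : V) = yh j := by
      intro j
      have hmem : (ev j : V) ∈ vs := (ev j).2
      rw [hy]
      dsimp only
      rw [dif_pos hmem, show (⟨(ev j : V), hmem⟩ : {x // x ∈ vs}) = ev j from Subtype.ext rfl]
      rw [hev, Equiv.apply_symm_apply]
    refine ⟨y, fun e he => ?_, ?_⟩
    · rw [← sum_row_eq_lc vs e.1 (hsupp e he) y, ← hev]
      have hi := hyh (Fin.castSucc (ec.symm ⟨e, he⟩))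
      simp only [Fin.snoc_castSucc, Equiv.apply_symm_apply, zero_smul] at hi
      calc ∑ j, e.1 (ev j : V) • y (ev j : V)
          = ∑ j, (ec (ec.symm ⟨e, he⟩) : Eqn R X V).1 (ev j : V) • yh j := by
            refine Finset.sum_congr rfl fun j _ => ?_
            rw [hyval j, Equiv.apply_symm_apply]
        _ = 0 := by
            rw [show (ec (ec.symm ⟨e, he⟩) : Eqn R X V) = e by rw [Equiv.apply_symm_apply]]
            simpa using hi
    · have hlast := hyh (Fin.last cs.card)
      simp only [Fin.snoc_last, one_smul] at hlast
      have : ∑ j, (if j = j₀ then (1 : R) else 0) • yh j = yh j₀ := by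
        simp [ite_smul]
      rw [hy]
      dsimp only
      rw [dif_pos hv₀, ← hj₀, ← this, hlast]
  · rintro ⟨y, hy, rfl⟩
    refine ⟨fun j => y (ev j : V), fun i => ?_⟩
    refine Fin.lastCases ?_ (fun i => ?_) i
    · simp only [Fin.snoc_last, one_smul]
      have : ∑ j, (if j = j₀ then (1 : R) else 0) • y (ev j : V) = y (ev j₀ : V) := by
        simp [ite_smul]
      rw [this, hj₀, hev, Equiv.symm_apply_apply]
    · simp only [Fin.snoc_castSucc, zero_smul]
      have := sum_row_eq_lc vs (ec i : Eqn R X V).1 (hsupp _ (ec i).2) y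
      rw [← hev] at this
      rw [show (∑ j, (ec i : Eqn R X V).1 (ev j : V) • y (ev j : V))
          = Finsupp.linearCombination R y (ec i : Eqn R X V).1 from this]
      exact hy _ (ec i).2

theorem chain_finset_subset {α : Type*} {ch : Set (Set α)} (hch : IsChain (· ⊆ ·) ch)
    (hne : ch.Nonempty) (c : Finset α) (hc : ↑c ⊆ ⋃₀ ch) : ∃ Z ∈ ch, ↑c ⊆ Z := by
  classical
  induction c using Finset.induction with
  | empty => obtain ⟨Z, hZ⟩ := hne; exact ⟨Z, hZ, by simp⟩
  | @insert a c ha ih =>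
    have hac : (a : α) ∈ ⋃₀ ch := hc (by simp)
    obtain ⟨Z1, hZ1, haZ1⟩ := hac
    obtain ⟨Z2, hZ2, hcZ2⟩ := ih (by
      refine subset_trans ?_ hc
      simp only [Finset.coe_insert]
      exact Set.subset_insert _ _)
    rcases hch.total hZ1 hZ2 with h | h
    · exact ⟨Z2, hZ2, by rw [Finset.coe_insert]; exact Set.insert_subset (h haZ1) hcZ2⟩
    · exact ⟨Z1, hZ1, by rw [Finset.coe_insert]; exact Set.insert_subset haZ1 (hcZ2.trans h)⟩

/-- Key extension step: if a system is finitely solvable, one can choose a value for any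
given variable keeping it finitely solvable. -/
theorem exists_extend (hdcc : PPDCC R X) {V : Type*} (Z : Set (Eqn R X V))
    (hfs : FinSolv Z) (v₀ : V) :
    ∃ x₀ : X, FinSolv (insert ((Finsupp.single v₀ 1 : V →₀ R), x₀) Z) := by
  classical
  set F : Set (PPF R) := {φ | ∃ cs : Finset (Eqn R X V), ↑cs ⊆ Z ∧ φ.sol X = HomSolSet cs v₀}
    with hF
  have hne : F.Nonempty := by
    obtain ⟨φ, hφ⟩ := exists_ppf_homSolSet (∅ : Finset (Eqn R X V)) v₀
    exact ⟨φ, ∅, by simp, hφ⟩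
  obtain ⟨φs, ⟨css, hcssZ, hφs⟩, hmin⟩ := hdcc.exists_min F hne
  obtain ⟨ys, hys⟩ := hfs css hcssZ
  set x₀ := ys v₀ with hx₀def
  have hx₀ : x₀ ∈ SolSet css v₀ := ⟨ys, fun e he => hys e he, rfl⟩
  have key : ∀ cs : Finset (Eqn R X V), ↑cs ⊆ Z → x₀ ∈ SolSet cs v₀ := by
    intro cs hcsZ
    set cs' := cs ∪ css with hcs'
    have hcs'Z : ↑cs' ⊆ Z := by
      rw [hcs', Finset.coe_union]
      exact Set.union_subset hcsZ hcssZ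
    obtain ⟨φ', hφ'⟩ := exists_ppf_homSolSet cs' v₀
    have heq' : HomSolSet cs' v₀ = HomSolSet css v₀ := by
      have := hmin φ' ⟨cs', hcs'Z, hφ'⟩ (by
        rw [hφ', hφs]
        exact HomSolSet.antitone Finset.subset_union_right v₀)
      rw [← hφ', this, hφs]
    obtain ⟨y1, hy1⟩ := hfs cs' hcs'Z
    have hx1 : y1 v₀ ∈ SolSet cs' v₀ := ⟨y1, fun e he => hy1 e he, rfl⟩
    have hx1s : y1 v₀ ∈ SolSet css v₀ := SolSet.antitone Finset.subset_union_right v₀ hx1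
    have hdiff : x₀ - y1 v₀ ∈ HomSolSet cs' v₀ := by
      rw [heq']
      exact SolSet.sub_mem_hom hx₀ hx1s
    have : y1 v₀ + (x₀ - y1 v₀) ∈ SolSet cs' v₀ := SolSet.add_hom hx1 hdiff
    rw [add_sub_cancel] at this
    exact SolSet.antitone Finset.subset_union_left v₀ this
  refine ⟨x₀, fun d hd => ?_⟩
  set d' := d.erase ((Finsupp.single v₀ 1 : V →₀ R), x₀) with hd'def
  have hd'Z : ↑d' ⊆ Z := by
    intro e' he'
    rw [hd'def, Finset.coe_erase] at he'
    rcases hd he'.1 with h | h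
    · exact absurd h he'.2
    · exact h
  obtain ⟨y, hy, hyv⟩ := key d' hd'Z
  refine ⟨y, fun e he => ?_⟩
  by_cases hec : e = ((Finsupp.single v₀ 1 : V →₀ R), x₀)
  · subst hec
    simp only [Finsupp.linearCombination_single, one_smul]
    exact hyv
  · exact hy e (Finset.mem_erase.mpr ⟨hec, he⟩)

end DCC

section LemmaB
variable {R : Type u} [Ring R]
variable {X : Type u} [AddCommGroup X] [Module R X]

theorem AlgCompact.of_ppdcc (hdcc : PPDCC R X) : AlgCompact R X := by
  intro V Y hfs
  classical
  set S : Set (Set (Eqn R X V)) := {Z | Y ⊆ Z ∧ FinSolv Z} with hS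
  have hY : Y ∈ S := ⟨subset_rfl, hfs⟩
  have hchain : ∀ ch ⊆ S, IsChain (· ⊆ ·) ch → ch.Nonempty →
      ∃ ub ∈ S, ∀ s ∈ ch, s ⊆ ub := by
    intro ch hchS hch hchne
    refine ⟨⋃₀ ch, ⟨?_, ?_⟩, fun s hs => Set.subset_sUnion_of_mem hs⟩
    · obtain ⟨Z, hZ⟩ := hchne
      exact (hchS hZ).1.trans (Set.subset_sUnion_of_mem hZ)
    · intro cfin hcfin
      obtain ⟨Z, hZch, hcZ⟩ := chain_finset_subset hch hchne cfin hcfin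
      exact (hchS hZch).2 cfin hcZ
  obtain ⟨Z₀, hYZ₀, hmax⟩ := zorn_subset_nonempty S hchain Y hY
  have hZ₀S : Z₀ ∈ S := hmax.1
  have hcons : ∀ v : V, ∃ x : X, ((Finsupp.single v 1 : V →₀ R), x) ∈ Z₀ := by
    intro v
    obtain ⟨x₀, hx₀⟩ := exists_extend hdcc Z₀ hZ₀S.2 v
    have hmem : insert ((Finsupp.single v 1 : V →₀ R), x₀) Z₀ ∈ S :=
      ⟨hZ₀S.1.trans (Set.subset_insert _ _), hx₀⟩
    exact ⟨x₀, hmax.2 hmem (Set.subset_insert _ _) (Set.mem_insert _ _)⟩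
  choose y hy using hcons
  refine ⟨y, fun e heY => ?_⟩
  set d : Finset (Eqn R X V) :=
    insert e (e.1.support.image fun v => ((Finsupp.single v 1 : V →₀ R), y v)) with hd
  have hdZ : ↑d ⊆ Z₀ := by
    intro e' he'
    rw [hd, Finset.coe_insert] at he'
    rcases he' with rfl | he'
    · exact hZ₀S.1 heY
    · rw [Finset.coe_image] at he'
      obtain ⟨v, _, rfl⟩ := he'
      exact hy v
  obtain ⟨y', hy'⟩ := hZ₀S.2 d hdZ
  have hagree : ∀ v ∈ e.1.support, y' v = y v := by
    intro v hv
    have := hy' ((Finsupp.single v 1 : V →₀ R), y v)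
      (Finset.mem_insert_of_mem (Finset.mem_image_of_mem _ hv))
    simpa [Finsupp.linearCombination_single] using this
  rw [← hy' e (Finset.mem_insert_self _ _)]
  exact lc_congr fun v hv => (hagree v hv).symm
end LemmaB

section Transfer
variable {R : Type u} [Ring R]
variable {X : Type v} [AddCommGroup X] [Module R X]

/-- Conjunction of two pp formulas. -/
def PPF.conj (φ ψ : PPF R) : PPF R where
  m := φ.m + ψ.m
  k := φ.k + ψ.k
  a := fun i j =>
    Fin.addCases (fun i1 => Fin.addCases (fun j1 => φ.a i1 j1) (fun _ => 0) j)
      (fun i2 => Fin.addCases (fun _ => 0) (fun j2 => ψ.a i2 j2) j) i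
  c := Fin.addCases φ.c ψ.c

theorem PPF.sol_conj (φ ψ : PPF R) : (φ.conj ψ).sol X = φ.sol X ∩ ψ.sol X := by
  ext x
  simp only [PPF.sol, PPF.conj, Set.mem_setOf_eq, Set.mem_inter_iff]
  constructor
  · rintro ⟨y, hy⟩
    refine ⟨⟨fun j1 => y (Fin.castAdd ψ.k j1), fun i1 => ?_⟩,
      ⟨fun j2 => y (Fin.natAdd φ.k j2), fun i2 => ?_⟩⟩
    · have := hy (Fin.castAdd ψ.m i1)
      erw [Fin.sum_univ_add] at this
      simpa using this
    · have := hy (Fin.natAdd φ.m i2)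
      erw [Fin.sum_univ_add] at this
      simpa using this
  · rintro ⟨⟨y1, hy1⟩, ⟨y2, hy2⟩⟩
    refine ⟨Fin.addCases y1 y2, fun i => ?_⟩
    refine Fin.addCases (fun i1 => ?_) (fun i2 => ?_) i
    · erw [Fin.sum_univ_add]
      simpa using hy1 i1
    · erw [Fin.sum_univ_add]
      simpa using hy2 i2

/-- For a pure map `f : M →ₗ[R] N`, pp solution sets in `M` are preimages of those in `N`. -/
theorem PPF.sol_pure {M N : Type v} [AddCommGroup M] [Module R M] [AddCommGroup N] [Module R N]
    (f : M →ₗ[R] N) (hpure : IsPureMap R f) (φ : PPF R) :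
    φ.sol M = f ⁻¹' (φ.sol N) := by
  ext x
  constructor
  · intro hx
    exact φ.map_mem_sol f hx
  · rintro ⟨y, hy⟩
    have := hpure φ.m φ.k φ.a (fun i => φ.c i • x)
      ⟨y, fun i => by rw [hy i, map_smul]⟩
    obtain ⟨y', hy'⟩ := this
    exact ⟨y', hy'⟩

theorem PPDCC.of_pure {M N : Type v} [AddCommGroup M] [Module R M] [AddCommGroup N] [Module R N]
    (f : M →ₗ[R] N) (hpure : IsPureMap R f) (hN : PPDCC R N) : PPDCC R M := by
  rintro ⟨ψ, hψ⟩
  set χ : ℕ → PPF R := fun n => Nat.rec (ψ 0) (fun n χn => χn.conj (ψ (n + 1))) n with hχ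
  have hχs : ∀ n, χ (n + 1) = (χ n).conj (ψ (n + 1)) := fun n => rfl
  have hχM : ∀ n, (χ n).sol M = (ψ n).sol M := by
    intro n
    induction n with
    | zero => rfl
    | succ n ih =>
      rw [hχs n, PPF.sol_conj, ih]
      exact Set.inter_eq_self_of_subset_right (hψ n).subset
  refine hN ⟨χ, fun n => ?_⟩
  rw [Set.ssubset_iff_subset_ne]
  constructor
  · rw [hχs n, PPF.sol_conj]
    exact Set.inter_subset_left
  · intro heq
    have : (χ (n + 1)).sol M = (χ n).sol M := by
      rw [PPF.sol_pure f hpure, PPF.sol_pure f hpure, heq]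
    rw [hχM (n + 1), hχM n] at this
    exact (hψ n).ne this

/-- Componentwise characterization of pp solution sets in finite support functions. -/
theorem PPF.sol_finsupp_iff {M : Type v} [AddCommGroup M] [Module R M] (φ : PPF R)
    (z : ℕ →₀ M) : z ∈ φ.sol (ℕ →₀ M) ↔ ∀ i : ℕ, z i ∈ φ.sol M := by
  classical
  constructor
  · intro hz i
    have := φ.map_mem_sol (Finsupp.lapply (R := R) (M := M) i) hz
    simpa using this
  · intro hz
    choose w hw using hz
    set Y : Fin φ.k → (ℕ →₀ M) := fun j => ∑ i ∈ z.support, Finsupp.single i (w i j) with hY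
    have hYval : ∀ (j : Fin φ.k) (t : ℕ), (Y j) t = if t ∈ z.support then w t j else 0 := by
      intro j t
      rw [hY]
      dsimp only
      rw [Finsupp.finset_sum_apply]
      rw [Finset.sum_congr rfl fun i _ => Finsupp.single_apply (a := i) (b := w i j) (a' := t)]
      exact Finset.sum_ite_eq' z.support t fun i => w i j
    refine ⟨Y, fun l => ?_⟩
    ext t
    rw [Finsupp.smul_apply]
    have : (∑ j, φ.a l j • Y j) t = ∑ j, φ.a l j • (Y j) t := by
      rw [Finsupp.finset_sum_apply]
      exact Finset.sum_congr rfl fun j _ => Finsupp.smul_apply _ _ _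
    rw [this]
    by_cases ht : t ∈ z.support
    · rw [Finset.sum_congr rfl fun j _ => by rw [hYval j t, if_pos ht]]
      exact hw t l
    · rw [Finset.sum_congr rfl fun j _ => by rw [hYval j t, if_neg ht, smul_zero]]
      rw [Finsupp.notMem_support_iff.mp ht, smul_zero, Finset.sum_const_zero]

theorem PPDCC.finsupp {M : Type v} [AddCommGroup M] [Module R M] (hM : PPDCC R M) :
    PPDCC R (ℕ →₀ M) := by
  rintro ⟨ψ, hψ⟩
  refine hM ⟨ψ, fun n => ?_⟩
  have hsub : (ψ (n + 1)).sol M ⊆ (ψ n).sol M := by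
    intro a ha
    have h1 : Finsupp.single 0 a ∈ (ψ (n + 1)).sol (ℕ →₀ M) :=
      (ψ (n + 1)).map_mem_sol (Finsupp.lsingle (R := R) 0) ha
    have h2 := (hψ n).subset h1
    have := (ψ n).map_mem_sol (Finsupp.lapply (R := R) (M := M) (0 : ℕ)) h2
    simpa using this
  rw [Set.ssubset_iff_of_subset hsub]
  obtain ⟨z, hz1, hz2⟩ := Set.exists_of_ssubset (hψ n)
  rw [PPF.sol_finsupp_iff] at hz2
  push_neg at hz2
  obtain ⟨i, hi⟩ := hz2
  refine ⟨z i, ?_, hi⟩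
  have := (ψ n).map_mem_sol (Finsupp.lapply (R := R) (M := M) i) hz1
  simpa using this

end Transfer

section Zimmermann
variable {R : Type u} [Ring R]

theorem PPF.sum_mem_sol {X : Type v} [AddCommGroup X] [Module R X] (φ : PPF R)
    {ι : Type*} (t : Finset ι) (g : ι → X) (hg : ∀ i ∈ t, g i ∈ φ.sol X) :
    (∑ i ∈ t, g i) ∈ φ.sol X :=
  Finset.sum_induction g (· ∈ φ.sol X) (fun _ _ => φ.add_mem_sol) φ.zero_mem_sol hg

theorem PPDCC.of_algCompact_finsupp {N : Type u} [AddCommGroup N] [Module R N]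
    (hAC : AlgCompact R (ℕ →₀ N)) : PPDCC R N := by
  rintro ⟨φ, hφ⟩
  classical
  have hex : ∀ n, ∃ b : N, b ∈ (φ n).sol N ∧ b ∉ (φ (n + 1)).sol N := by
    intro n
    obtain ⟨b, hb1, hb2⟩ := Set.exists_of_ssubset (hφ n)
    exact ⟨b, hb1, hb2⟩
  choose a ha han using hex
  have hmono : ∀ m n : ℕ, m ≤ n → (φ n).sol N ⊆ (φ m).sol N := by
    intro m n h
    induction h with
    | refl => exact subset_rfl
    | @step n' hmn' ih => exact (hφ n').subset.trans ih
  set X := ℕ →₀ N with hX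
  set s : ℕ → X := fun n => ∑ k ∈ Finset.range (n + 1), Finsupp.single k (a k) with hs
  have hsdiff : ∀ m n : ℕ, n ≤ m → s m - s n ∈ (φ (n + 1)).sol X := by
    intro m n hnm
    have : s m - s n = ∑ k ∈ Finset.Ico (n + 1) (m + 1), Finsupp.single k (a k) := by
      rw [hs]
      dsimp only
      rw [Finset.sum_Ico_eq_sub _ (by omega : n + 1 ≤ m + 1)]
    rw [this]
    refine (φ (n + 1)).sum_mem_sol _ _ fun k hk => ?_
    have hk' : n + 1 ≤ k := (Finset.mem_Ico.mp hk).1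
    exact (φ (n + 1)).map_mem_sol (Finsupp.lsingle (R := R) k) (hmono (n + 1) k hk' (ha k))
  set V : Type u := ULift.{u} (Option (ℕ × ℕ)) with hV
  set eqn : (Σ n : ℕ, Fin (φ (n + 1)).m) → Eqn R X V := fun p =>
    ((∑ j : Fin (φ (p.1 + 1)).k,
        Finsupp.single (ULift.up (Option.some (p.1, (j : ℕ)))) ((φ (p.1 + 1)).a p.2 j))
        - Finsupp.single (ULift.up Option.none) ((φ (p.1 + 1)).c p.2),
      -((φ (p.1 + 1)).c p.2 • s p.1)) with heqn
  have hlc : ∀ (p : Σ n : ℕ, Fin (φ (n + 1)).m) (y : V → X),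
      Finsupp.linearCombination R y (eqn p).1
        = (∑ j : Fin (φ (p.1 + 1)).k,
            (φ (p.1 + 1)).a p.2 j • y (ULift.up (Option.some (p.1, (j : ℕ)))))
          - (φ (p.1 + 1)).c p.2 • y (ULift.up Option.none) := by
    intro p y
    rw [heqn]
    dsimp only
    rw [map_sub, map_sum]
    congr 1
    · exact Finset.sum_congr rfl fun j _ => Finsupp.linearCombination_single R _ _
    · exact Finsupp.linearCombination_single R _ _
  have hfs : FinSolv (Set.range eqn) := by
    intro d hd
    have hpre : ∀ e : {e // e ∈ d}, ∃ p, eqn p = (e : Eqn R X V) :=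
      fun e => hd (Finset.mem_coe.mpr e.2)
    choose pre hpre' using hpre
    set n₀ : ℕ := (d.attach.image fun e => (pre e).1).sup id with hn₀
    have hle : ∀ e : {e // e ∈ d}, (pre e).1 ≤ n₀ :=
      fun e => Finset.le_sup (f := id) (Finset.mem_image_of_mem _ (Finset.mem_attach _ _))
    set y : V → X := fun v =>
      match v.down with
      | Option.none => s n₀
      | Option.some (n, t) =>
        if h : n ≤ n₀ ∧ t < (φ (n + 1)).k then (hsdiff n₀ n h.1).choose ⟨t, h.2⟩ else 0
      with hy
    refine ⟨y, fun e he => ?_⟩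
    have he' : e ∈ d := Finset.mem_coe.mp he
    set p := pre ⟨e, he'⟩ with hpdef
    have hp : eqn p = e := hpre' ⟨e, he'⟩
    have hpn : p.1 ≤ n₀ := hle ⟨e, he'⟩
    rw [← hp, hlc p y]
    have hyw : ∀ j : Fin (φ (p.1 + 1)).k,
        y (ULift.up (Option.some (p.1, (j : ℕ)))) = (hsdiff n₀ p.1 hpn).choose j := by
      intro j
      rw [hy]
      show (if h : p.1 ≤ n₀ ∧ (j : ℕ) < (φ (p.1 + 1)).k
          then (hsdiff n₀ p.1 h.1).choose ⟨(j : ℕ), h.2⟩ else 0) = (hsdiff n₀ p.1 hpn).choose j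
      rw [dif_pos ⟨hpn, j.isLt⟩]
    have hynone : y (ULift.up Option.none) = s n₀ := by rw [hy]
    rw [hynone, Finset.sum_congr rfl fun j _ => by rw [hyw j]]
    have hspec := (hsdiff n₀ p.1 hpn).choose_spec p.2
    rw [hspec, smul_sub]
    show (φ (p.1 + 1)).c p.2 • s n₀ - (φ (p.1 + 1)).c p.2 • s p.1
        - (φ (p.1 + 1)).c p.2 • s n₀ = (eqn p).2
    have h2 : (eqn p).2 = -((φ (p.1 + 1)).c p.2 • s p.1) := by rw [heqn]
    rw [h2]
    abel
  obtain ⟨y, hy⟩ := hAC V (Set.range eqn) hfs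
  set x : X := y (ULift.up Option.none) with hx
  have hmem : ∀ n : ℕ, x - s n ∈ (φ (n + 1)).sol X := by
    intro n
    refine ⟨fun j => y (ULift.up (Option.some (n, (j : ℕ)))), fun i => ?_⟩
    have h1 := hy (eqn ⟨n, i⟩) (Set.mem_range_self _)
    rw [hlc ⟨n, i⟩ y] at h1
    have h2 : (eqn ⟨n, i⟩).2 = -((φ (n + 1)).c i • s n) := by rw [heqn]
    rw [h2] at h1
    show ∑ j : Fin (φ (n + 1)).k,
        (φ (n + 1)).a i j • y (ULift.up (Option.some (n, (j : ℕ))))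
      = (φ (n + 1)).c i • (x - s n)
    have h3 := sub_eq_iff_eq_add.mp h1
    rw [smul_sub, h3, hx]
    abel
  set m : ℕ := x.support.sup id + 1 with hm
  have hxm : x m = 0 := by
    refine Finsupp.notMem_support_iff.mp fun hmem' => ?_
    have := Finset.le_sup (f := id) hmem'
    simp only [id] at this
    omega
  have hsm : (s m) m = a m := by
    rw [hs]
    dsimp only
    rw [Finsupp.finset_sum_apply]
    rw [Finset.sum_congr rfl fun k _ => Finsupp.single_apply (a := k) (b := a k) (a' := m)]
    rw [Finset.sum_ite_eq' (Finset.range (m + 1)) m a]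
    rw [if_pos (Finset.mem_range.mpr (by omega))]
  have hproj := (φ (m + 1)).map_mem_sol (Finsupp.lapply (R := R) (M := N) m) (hmem m)
  have hneg : -(a m) ∈ (φ (m + 1)).sol N := by
    have heval : (Finsupp.lapply (R := R) (M := N) m) (x - s m) = -(a m) := by
      rw [map_sub]
      show x m - (s m) m = -(a m)
      rw [hxm, hsm, zero_sub]
    rwa [heval] at hproj
  exact han m (by simpa using (φ (m + 1)).neg_mem_sol hneg)

end Zimmermann

/-- If `N^(ℕ)` is pure-injective and `M` is a pure submodule of `N`, then `M^(ℕ)`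
is pure-injective. -/
theorem sigmaPureInjective_of_pure_submodule (R : Type u) [Ring R]
    (M N : Type u) [AddCommGroup M] [Module R M] [AddCommGroup N] [Module R N]
    (f : M →ₗ[R] N) (hf : Function.Injective f) (hpure : IsPureMap R f)
    (hN : PureInjective R (ℕ →₀ N)) :
    PureInjective R (ℕ →₀ M) := by
  have hEac : AlgCompact R (ℕ →₀ N) := AlgCompact.of_pureInjective hN
  have hdccN : PPDCC R N := PPDCC.of_algCompact_finsupp hEac
  have hdccM : PPDCC R M := PPDCC.of_pure f hpure hdccN
  have hdccQ : PPDCC R (ℕ →₀ M) := PPDCC.finsupp hdccM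
  exact PureInjective.of_algCompact (AlgCompact.of_ppdcc hdccQ)
end

section
/- Let R be a ring and M, N₁, N₂ left R-modules with M a submodule of both N₁ and N₂. Let b̄₁ ∈ N₁^n and b̄₂ ∈ N₂^n be finite tuples. If the quantifier-free types of b̄₁ over M in N₁ and of b̄₂ over M in N₂ (in the language of R-modules) are equal, then there exist a left R-module N and embeddings f₁ : N₁ → N, f₂ : N₂ → N fixing M pointwise such that f₁(b̄₁) = f₂(b̄₂). -/
universe u

/-- If two tuples in extensions `N₁`, `N₂` of a common submodule `M` have the same
quantifier-free type over `M` (in the language of left `R`-modules, such types are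
determined by the `R`-linear relations among the tuple entries over `M`), then the two
extensions can be amalgamated over `M` identifying the tuples. -/
theorem qfTypes_amalgamation (R : Type u) [Ring R]
    (M N₁ N₂ : Type u) [AddCommGroup M] [Module R M]
    [AddCommGroup N₁] [Module R N₁] [AddCommGroup N₂] [Module R N₂]
    (e₁ : M →ₗ[R] N₁) (e₂ : M →ₗ[R] N₂)
    (he₁ : Function.Injective e₁) (he₂ : Function.Injective e₂)
    (n : ℕ) (b₁ : Fin n → N₁) (b₂ : Fin n → N₂)
    (htp : ∀ (r : Fin n → R) (m : M),
      (∑ i, r i • b₁ i = e₁ m) ↔ (∑ i, r i • b₂ i = e₂ m)) :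
    ∃ (N : ModuleCat.{u} R) (f₁ : N₁ →ₗ[R] N) (f₂ : N₂ →ₗ[R] N),
      Function.Injective f₁ ∧ Function.Injective f₂ ∧
      f₁ ∘ₗ e₁ = f₂ ∘ₗ e₂ ∧ ∀ i, f₁ (b₁ i) = f₂ (b₂ i) := by
  classical
  set c₁ : (Fin n → R) →ₗ[R] N₁ := Fintype.linearCombination R b₁ with hc₁
  set c₂ : (Fin n → R) →ₗ[R] N₂ := Fintype.linearCombination R b₂ with hc₂
  set g : (M × (Fin n → R)) →ₗ[R] N₁ × N₂ :=
    LinearMap.prod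
      (e₁.comp (LinearMap.fst R M (Fin n → R)) + c₁.comp (LinearMap.snd R M (Fin n → R)))
      (-(e₂.comp (LinearMap.fst R M (Fin n → R)) + c₂.comp (LinearMap.snd R M (Fin n → R))))
    with hg
  set K := LinearMap.range g with hK
  have hmem : ∀ x y, (x, y) ∈ K ↔
      ∃ (m : M) (r : Fin n → R), x = e₁ m + ∑ i, r i • b₁ i ∧ y = -(e₂ m + ∑ i, r i • b₂ i) := by
    intro x y
    constructor
    · rintro ⟨⟨m, r⟩, h⟩
      exact ⟨m, r, (congrArg Prod.fst h).symm, (congrArg Prod.snd h).symm⟩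
    · rintro ⟨m, r, hx, hy⟩
      refine ⟨(m, r), ?_⟩
      simp only [hg, LinearMap.prod_apply, Pi.prod, LinearMap.add_apply, LinearMap.comp_apply,
        LinearMap.fst_apply, LinearMap.snd_apply, LinearMap.neg_apply, hc₁, hc₂,
        Fintype.linearCombination_apply]
      exact Prod.ext hx.symm hy.symm
  refine ⟨ModuleCat.of R ((N₁ × N₂) ⧸ K), K.mkQ.comp (LinearMap.inl R N₁ N₂),
    K.mkQ.comp (LinearMap.inr R N₁ N₂), ?_, ?_, ?_, ?_⟩
  · rw [← LinearMap.ker_eq_bot, LinearMap.ker_eq_bot']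
    intro x hx
    have hK0 : (x, (0 : N₂)) ∈ K := (Submodule.Quotient.mk_eq_zero K).mp hx
    obtain ⟨m, r, hxm, h0⟩ := (hmem _ _).1 hK0
    have hz : e₂ m + ∑ i, r i • b₂ i = 0 := by
      rw [← neg_eq_zero]; exact h0.symm
    have h0' : ∑ i, r i • b₂ i = e₂ (-m) := by
      rw [map_neg]; exact eq_neg_of_add_eq_zero_right hz
    have h1' : ∑ i, r i • b₁ i = e₁ (-m) := (htp r (-m)).2 h0'
    rw [hxm, h1', map_neg, add_neg_cancel]
  · rw [← LinearMap.ker_eq_bot, LinearMap.ker_eq_bot']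
    intro y hy
    have hK0 : ((0 : N₁), y) ∈ K := (Submodule.Quotient.mk_eq_zero K).mp hy
    obtain ⟨m, r, h0, hym⟩ := (hmem _ _).1 hK0
    have h1' : ∑ i, r i • b₁ i = e₁ (-m) := by
      rw [map_neg]; exact eq_neg_of_add_eq_zero_right h0.symm
    have h0' : ∑ i, r i • b₂ i = e₂ (-m) := (htp r (-m)).1 h1'
    rw [hym, h0', map_neg, add_neg_cancel, neg_zero]
  · ext m
    show Submodule.Quotient.mk _ = Submodule.Quotient.mk _
    rw [Submodule.Quotient.eq]
    exact (hmem (e₁ m - 0) (0 - e₂ m)).2 ⟨m, 0, by simp, by simp⟩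
  · intro i
    show Submodule.Quotient.mk _ = Submodule.Quotient.mk _
    rw [Submodule.Quotient.eq]
    refine (hmem (b₁ i - 0) (0 - b₂ i)).2 ⟨0, Pi.single i 1, ?_, ?_⟩ <;>
      simp [Pi.single_apply, ite_smul, Finset.sum_ite_eq']
end

section
/- Let R be a ring. If there is an infinite cardinal λ ≥ |R| + ℵ₀ such that every left R-module of cardinality at most λ embeds into a fixed injective left R-module U of cardinality λ, then λ^{<γ_R} = λ, where γ_R is the least cardinal such that every left ideal of R is generated by fewer than γ_R elements. -/
open Cardinal

universe u

namespace EklofAux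

variable {R : Type u} [Ring R] {U : Type u} [AddCommGroup U] [Module R U]

/-- step for `gen` -/
noncomputable def genStep (I : Ideal R) {k : Type u} [LinearOrder k]
    (β : k) (ih : ∀ α, α < β → R) : R :=
  @Classical.epsilon R ⟨0⟩ fun x =>
    x ∈ I ∧ x ∉ Ideal.span {y | ∃ α, ∃ hα : α < β, ih α hα = y}

/-- choose generators of an ideal by transfinite recursion -/
noncomputable def gen (I : Ideal R) {k : Type u} [LinearOrder k] [WellFoundedLT k] : k → R :=
  WellFoundedLT.fix (genStep I)

lemma gen_eq (I : Ideal R) {k : Type u} [LinearOrder k] [WellFoundedLT k] (β : k) :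
    gen I β = @Classical.epsilon R ⟨0⟩ fun x =>
      x ∈ I ∧ x ∉ Ideal.span (gen I '' Set.Iio β) := by
  have h1 := WellFoundedLT.fix_eq (genStep I) β
  rw [gen, h1, genStep]
  congr 2
  funext y
  have h2 : {y | ∃ α, ∃ _ : α < β, WellFoundedLT.fix (genStep I) α = y}
      = WellFoundedLT.fix (genStep I) '' Set.Iio β := by
    ext z; simp [Set.mem_image]
  rw [h2]

lemma gen_spec {κ : Cardinal.{u}} (I : Ideal R) {k : Type u} [LinearOrder k] [WellFoundedLT k]
    (hk : ∀ β : k, #(Set.Iio β) < κ)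
    (hI : ∀ s : Set R, Ideal.span s = I → κ ≤ #s) (β : k) :
    gen I β ∈ I ∧ gen I β ∉ Ideal.span (gen I '' Set.Iio β) := by
  induction β using WellFoundedLT.induction with
  | ind β ih =>
    have hsub : gen I '' Set.Iio β ⊆ I := by
      rintro x ⟨α, hα, rfl⟩; exact (ih α hα).1
    have hcard : #(gen I '' Set.Iio β) < κ :=
      lt_of_le_of_lt Cardinal.mk_image_le (hk β)
    have hne : Ideal.span (gen I '' Set.Iio β) ≠ I := fun h =>
      absurd (hI _ h) (not_le.2 hcard)
    have hex : ∃ x, x ∈ I ∧ x ∉ Ideal.span (gen I '' Set.Iio β) := by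
      by_contra h'
      push_neg at h'
      exact hne (le_antisymm (Ideal.span_le.2 hsub) h')
    rw [gen_eq]
    exact Classical.epsilon_spec hex


/-- extension of a partial linear map into an injective module, via Baer's criterion -/
noncomputable def ext0 (baer : Module.Baer R U) (p : R →ₗ.[R] U) : R →ₗ[R] U :=
  (baer p.domain p.toFun).choose

lemma ext0_spec (baer : Module.Baer R U) (p : R →ₗ.[R] U) (x : R) (hx : x ∈ p.domain) :
    ext0 baer p x = p ⟨x, hx⟩ :=
  (baer p.domain p.toFun).choose_spec x hx

open Classical in
noncomputable def mySup (s : Set (R →ₗ.[R] U)) : R →ₗ.[R] U :=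
  if h : DirectedOn (· ≤ ·) s then LinearPMap.sSup s h else ⊥

lemma mySup_eq {s : Set (R →ₗ.[R] U)} (h : DirectedOn (· ≤ ·) s) :
    mySup s = LinearPMap.sSup s h := by
  rw [mySup]
  exact dif_pos h

lemma ple_apply {p q : R →ₗ.[R] U} (h : p ≤ q) (x : p.domain) (y : q.domain)
    (hxy : (x : R) = (y : R)) : p x = q y := h.2 hxy

lemma papply_eq {p q : R →ₗ.[R] U} (h : p = q) (x : p.domain) (y : q.domain)
    (hxy : (x : R) = (y : R)) : p x = q y := by
  obtain ⟨-, h2⟩ := LinearPMap.ext_iff.1 h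
  subst h; exact congrArg _ (Subtype.ext hxy)

/-- step of the transfinite construction of partial maps -/
noncomputable def phiStep (baer : Module.Baer R U) {k : Type u} [LinearOrder k]
    (D : k → Ideal R) (hm : ∀ β : k, (D β : Submodule R R) →ₗ[R] U)
    (β : k) (ih : ∀ α, α < β → (R →ₗ.[R] U)) : R →ₗ.[R] U :=
  ⟨D β, ((ext0 baer (mySup {p | ∃ α, ∃ hα : α < β, ih α hα = p})).domRestrict (D β)) + hm β⟩

/-- transfinite construction of a coherent family of partial maps -/
noncomputable def phi (baer : Module.Baer R U) {k : Type u} [LinearOrder k] [WellFoundedLT k]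
    (D : k → Ideal R) (hm : ∀ β : k, (D β : Submodule R R) →ₗ[R] U) : k → (R →ₗ.[R] U) :=
  WellFoundedLT.fix (phiStep baer D hm)

lemma phi_eq (baer : Module.Baer R U) {k : Type u} [LinearOrder k] [WellFoundedLT k]
    (D : k → Ideal R) (hm : ∀ β : k, (D β : Submodule R R) →ₗ[R] U) (β : k) :
    phi baer D hm β = ⟨D β,
      ((ext0 baer (mySup (phi baer D hm '' Set.Iio β))).domRestrict (D β)) + hm β⟩ := by
  have h1 := WellFoundedLT.fix_eq (phiStep baer D hm) β
  rw [phi, h1, phiStep]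
  have h2 : {p | ∃ α, ∃ _ : α < β, WellFoundedLT.fix (phiStep baer D hm) α = p}
      = WellFoundedLT.fix (phiStep baer D hm) '' Set.Iio β := by
    ext z; simp [Set.mem_image]
  rw [h2]

lemma phi_domain (baer : Module.Baer R U) {k : Type u} [LinearOrder k] [WellFoundedLT k]
    (D : k → Ideal R) (hm : ∀ β : k, (D β : Submodule R R) →ₗ[R] U) (β : k) :
    (phi baer D hm β).domain = D β := by rw [phi_eq]

lemma phi_mono (baer : Module.Baer R U) {k : Type u} [LinearOrder k] [WellFoundedLT k]
    (D Dlo : k → Ideal R) (hm : ∀ β : k, (D β : Submodule R R) →ₗ[R] U)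
    (hDD : ∀ β, Dlo β ≤ D β)
    (hDlt : ∀ {α β : k}, α < β → D α ≤ Dlo β)
    (hker : ∀ (β : k) (x : (D β : Submodule R R)), (x : R) ∈ Dlo β → hm β x = 0) :
    ∀ β α : k, α < β → phi baer D hm α ≤ phi baer D hm β := by
  intro β
  induction β using WellFoundedLT.induction with
  | ind β ih =>
    intro α hα
    have hle : ∀ a b : k, a ≤ b → b < β → phi baer D hm a ≤ phi baer D hm b := by
      intro a b hab hb
      rcases hab.lt_or_eq with h | h
      · exact ih b hb a h
      · exact h ▸ le_rfl
    have hdir : DirectedOn (· ≤ ·) (phi baer D hm '' Set.Iio β) := by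
      rintro p ⟨a, ha, rfl⟩ q ⟨b, hb, rfl⟩
      rcases le_total a b with h | h
      · exact ⟨_, ⟨b, hb, rfl⟩, hle a b h hb, le_rfl⟩
      · exact ⟨_, ⟨a, ha, rfl⟩, le_rfl, hle b a h ha⟩
    have h1 : phi baer D hm α ≤ LinearPMap.sSup _ hdir :=
      LinearPMap.le_sSup hdir ⟨α, hα, rfl⟩
    have hSdom : (LinearPMap.sSup _ hdir).domain ≤ (Dlo β : Submodule R R) := by
      show sSup (LinearPMap.domain '' (phi baer D hm '' Set.Iio β)) ≤ _
      apply sSup_le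
      rintro _ ⟨_, ⟨a, ha, rfl⟩, rfl⟩
      rw [phi_domain]
      exact hDlt ha
    refine le_trans h1 ?_
    rw [phi_eq baer D hm β]
    refine ⟨le_trans hSdom (hDD β), ?_⟩
    rintro x y hxy
    have hx' : (x : R) ∈ (Dlo β : Submodule R R) := hSdom x.2
    show LinearPMap.sSup _ hdir x
      = ((ext0 baer (mySup (phi baer D hm '' Set.Iio β))).domRestrict (D β)) y + hm β y
    have h0 : hm β y = 0 := hker β y (by rw [← hxy]; exact hx')
    rw [h0, add_zero, LinearMap.domRestrict_apply, mySup_eq hdir]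
    have hy : (y : R) ∈ (LinearPMap.sSup _ hdir).domain := by rw [← hxy]; exact x.2
    rw [ext0_spec baer _ (y : R) hy]
    have hxe : x = (⟨(y : R), hy⟩ : (LinearPMap.sSup _ hdir).domain) := Subtype.ext hxy
    rw [hxe]

lemma phi_congr (baer : Module.Baer R U) {k : Type u} [LinearOrder k] [WellFoundedLT k]
    (D : k → Ideal R) (hm hm' : ∀ β : k, (D β : Submodule R R) →ₗ[R] U) :
    ∀ β : k, (∀ α ≤ β, hm α = hm' α) → phi baer D hm β = phi baer D hm' β := by
  intro β
  induction β using WellFoundedLT.induction with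
  | ind β ih =>
    intro hagree
    rw [phi_eq, phi_eq]
    have h1 : phi baer D hm '' Set.Iio β = phi baer D hm' '' Set.Iio β :=
      Set.image_congr fun a ha => ih a ha fun α hα => hagree α (hα.trans (le_of_lt ha))
    rw [h1, hagree β le_rfl]


theorem pow_le (R : Type u) [Ring R] (c : Cardinal.{u}) (hc : #R + ℵ₀ ≤ c)
    (U : Type u) [AddCommGroup U] [Module R U]
    (hU : Module.Injective R U) (hcU : #U = c)
    (huniv : ∀ (M : Type u) [AddCommGroup M] [Module R M],
      #M ≤ c → ∃ f : M →ₗ[R] U, Function.Injective f)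
    (κ : Cardinal.{u}) (I : Ideal R)
    (hI : ∀ s : Set R, Ideal.span s = I → κ ≤ #s) : c ^ κ ≤ c := by
  classical
  have hRc : #R ≤ c := le_trans (self_le_add_right _ _) hc
  have hac : ℵ₀ ≤ c := le_trans (self_le_add_left _ _) hc
  haveI : Infinite U := Cardinal.infinite_iff.mpr (by rw [hcU]; exact hac)
  have baer : Module.Baer R U := Module.Baer.of_injective hU
  set k := κ.ord.ToType with hkdef
  have hkcard : #k = κ := Cardinal.mk_ord_toType κ
  have hIio : ∀ β : k, #(Set.Iio β) < κ := fun β => Cardinal.mk_Iio_ord_toType β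
  have hspec : ∀ β : k, gen I β ∈ I ∧ gen I β ∉ Ideal.span (gen I '' Set.Iio β) :=
    gen_spec I hIio hI
  set f : k → R := gen I with hfdef
  set J : k → Ideal R := fun β => Ideal.span (f '' Set.Iio β) with hJdef
  set J' : k → Ideal R := fun β => Ideal.span (f '' Set.Iic β) with hJ'def
  have hJJ' : ∀ β, J β ≤ J' β := fun β =>
    Ideal.span_mono (Set.image_mono Set.Iio_subset_Iic_self)
  have hJ'J : ∀ {α β : k}, α < β → J' α ≤ J β := fun h =>
    Ideal.span_mono (Set.image_mono fun x hx => lt_of_le_of_lt hx h)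
  have hfJ' : ∀ β, f β ∈ J' β := fun β =>
    Ideal.subset_span ⟨β, Set.mem_Iic.2 le_rfl, rfl⟩
  -- quotients
  set N := fun β : k => Submodule.comap (Submodule.subtype (J' β)) (J β) with hNdef
  set q : ∀ β : k, ((J' β : Submodule R R) ⧸ N β) :=
    fun β => Submodule.Quotient.mk ⟨f β, hfJ' β⟩ with hqdef
  have hq : ∀ β, q β ≠ 0 := by
    intro β h
    rw [hqdef] at h
    rw [Submodule.Quotient.mk_eq_zero] at h
    rw [hNdef] at h
    simp only [Submodule.mem_comap, Submodule.subtype_apply] at h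
    exact (hspec β).2 h
  -- cardinality of quotients
  have hQc : ∀ β : k, #((J' β : Submodule R R) ⧸ N β) ≤ c := by
    intro β
    refine le_trans (Cardinal.mk_le_of_surjective (Submodule.mkQ_surjective (N β))) ?_
    exact le_trans (Cardinal.mk_subtype_le _) hRc
  -- λ many homs out of each quotient
  have hgex : ∀ β : k, ∃ g : U → (((J' β : Submodule R R) ⧸ N β) →ₗ[R] U),
      Function.Injective (fun j => g j (q β)) := by
    intro β
    haveI : Nontrivial ((J' β : Submodule R R) ⧸ N β) := nontrivial_of_ne _ _ (hq β)
    have hcard : #(U →₀ ((J' β : Submodule R R) ⧸ N β)) ≤ c := by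
      rw [Cardinal.mk_finsupp_of_infinite]
      exact max_le (le_of_eq hcU) (hQc β)
    obtain ⟨e, he⟩ := huniv _ hcard
    refine ⟨fun j => e.comp (Finsupp.lsingle j), ?_⟩
    intro j j' h
    simp only [LinearMap.comp_apply, Finsupp.lsingle_apply] at h
    exact Finsupp.single_left_injective (hq β) (he h)
  choose g hginj using hgex
  -- the homs on J' β
  set hmap : ∀ β : k, U → ((J' β : Submodule R R) →ₗ[R] U) :=
    fun β j => (g β j).comp (N β).mkQ with hmapdef
  have hmap_ker : ∀ (β : k) (j : U) (x : (J' β : Submodule R R)),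
      (x : R) ∈ J β → hmap β j x = 0 := by
    intro β j x hx
    have hx' : x ∈ N β := by
      rw [hNdef]
      simp only [Submodule.mem_comap, Submodule.subtype_apply]
      exact hx
    have h0 : (N β).mkQ x = 0 := (Submodule.Quotient.mk_eq_zero _).2 hx' 
    rw [hmapdef]
    simp only [LinearMap.comp_apply, h0, map_zero]
  have hmap_val : ∀ (β : k) (j : U),
      hmap β j ⟨f β, hfJ' β⟩ = g β j (q β) := fun β j => rfl
  -- coherent families
  have hmono : ∀ (η : k → U) (β α : k), α < β →
      phi baer J' (fun b => hmap b (η b)) α ≤ phi baer J' (fun b => hmap b (η b)) β :=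
    fun η => phi_mono baer J' J (fun b => hmap b (η b)) hJJ'
      (fun {a b} h => hJ'J h) (fun β x hx => hmap_ker β (η β) x hx)
  have hle : ∀ (η : k → U) (a b : k), a ≤ b →
      phi baer J' (fun x => hmap x (η x)) a ≤ phi baer J' (fun x => hmap x (η x)) b := by
    intro η a b hab
    rcases hab.lt_or_eq with h | h
    · exact hmono η b a h
    · exact h ▸ le_rfl
  have hdirR : ∀ η : k → U, DirectedOn (· ≤ ·)
      (Set.range (phi baer J' (fun x => hmap x (η x)))) := by
    intro η
    rintro p ⟨a, rfl⟩ p' ⟨b, rfl⟩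
    rcases le_total a b with h | h
    · exact ⟨_, ⟨b, rfl⟩, hle η a b h, le_rfl⟩
    · exact ⟨_, ⟨a, rfl⟩, le_rfl, hle η b a h⟩
  -- evaluation of the limit map at f β
  have hval : ∀ (η : k → U) (β : k),
      ext0 baer (mySup (Set.range (phi baer J' (fun x => hmap x (η x))))) (f β)
        = ext0 baer (mySup ((phi baer J' (fun x => hmap x (η x))) '' Set.Iio β)) (f β)
          + g β (η β) (q β) := by
    intro η β
    have hmem : f β ∈ (phi baer J' (fun x => hmap x (η x)) β).domain := by
      rw [phi_domain]; exact hfJ' β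
    have h2 : phi baer J' (fun x => hmap x (η x)) β ≤ LinearPMap.sSup _ (hdirR η) :=
      LinearPMap.le_sSup (hdirR η) ⟨β, rfl⟩
    have hfd : f β ∈ (LinearPMap.sSup _ (hdirR η)).domain := h2.1 hmem
    rw [mySup_eq (hdirR η), ext0_spec baer _ (f β) hfd]
    have h3 : (LinearPMap.sSup _ (hdirR η)) ⟨f β, hfd⟩
        = phi baer J' (fun x => hmap x (η x)) β ⟨f β, hmem⟩ :=
      (ple_apply h2 ⟨f β, hmem⟩ ⟨f β, hfd⟩ rfl).symm
    rw [h3]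
    have h5 := papply_eq (phi_eq baer J' (fun x => hmap x (η x)) β)
      ⟨f β, hmem⟩ ⟨f β, hfJ' β⟩ rfl
    rw [h5, LinearPMap.mk_apply, LinearMap.add_apply, LinearMap.domRestrict_apply, hmap_val]
  -- the injection
  have hGinj : Function.Injective
      (fun η : k → U => ext0 baer (mySup (Set.range (phi baer J' (fun x => hmap x (η x))))) 1) := by
    intro η η' hG
    by_contra hne
    obtain ⟨β, hβW, hβmin⟩ := wellFounded_lt.has_min {β : k | η β ≠ η' β} (Function.ne_iff.1 hne)
    have hbelow : ∀ α, α < β → η α = η' α := fun α hα =>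
      not_not.1 fun h => hβmin α h hα
    have hLL : ext0 baer (mySup (Set.range (phi baer J' (fun x => hmap x (η x)))))
        = ext0 baer (mySup (Set.range (phi baer J' (fun x => hmap x (η' x))))) :=
      LinearMap.ext_ring hG
    have hΦeq : (phi baer J' (fun x => hmap x (η x))) '' Set.Iio β
        = (phi baer J' (fun x => hmap x (η' x))) '' Set.Iio β :=
      Set.image_congr fun a ha =>
        phi_congr baer J' _ _ a fun α hα => by rw [hbelow α (lt_of_le_of_lt hα ha)]
    have h3 : ext0 baer (mySup ((phi baer J' (fun x => hmap x (η x))) '' Set.Iio β)) (f β)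
          + g β (η β) (q β)
        = ext0 baer (mySup ((phi baer J' (fun x => hmap x (η x))) '' Set.Iio β)) (f β)
          + g β (η' β) (q β) := by
      rw [← hval η β, hLL, hval η' β, hΦeq]
    exact hβW (hginj β (add_left_cancel h3))
  calc c ^ κ = #U ^ #k := by rw [hcU, hkcard]
    _ = #(k → U) := (Cardinal.power_def U k).symm
    _ ≤ #U := Cardinal.mk_le_of_injective hGinj
    _ = c := hcU

end EklofAux

/-- Eklof: if there is an injective module `U` of cardinality `c ≥ |R| + ℵ₀` into which
every module of cardinality at most `c` embeds, then `c ^< γ_R = c`, where `γ_R` is the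
least cardinal such that every left ideal of `R` is generated by fewer than `γ_R`
elements. -/
theorem eklof_powerlt (R : Type u) [Ring R] (c : Cardinal.{u}) (hc : #R + ℵ₀ ≤ c)
    (U : Type u) [AddCommGroup U] [Module R U]
    (hU : Module.Injective R U) (hcU : #U = c)
    (huniv : ∀ (M : Type u) [AddCommGroup M] [Module R M],
      #M ≤ c → ∃ f : M →ₗ[R] U, Function.Injective f) :
    c ^< (sInf {γ : Cardinal.{u} |
      ∀ I : Ideal R, ∃ s : Set R, #s < γ ∧ Ideal.span s = I}) = c := by
  classical
  set S : Set Cardinal.{u} :=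
    {γ | ∀ I : Ideal R, ∃ s : Set R, #s < γ ∧ Ideal.span s = I} with hSdef
  have hac : ℵ₀ ≤ c := le_trans (self_le_add_left _ _) hc
  have hSne : S.Nonempty := by
    refine ⟨Order.succ #R, fun I => ⟨(I : Set R), ?_, Ideal.span_eq I⟩⟩
    exact (Cardinal.mk_set_le _).trans_lt (Order.lt_succ _)
  have hRnt : Nontrivial R := by
    by_contra h
    rw [not_nontrivial_iff_subsingleton] at h
    have hsub : Subsingleton U := ⟨fun a b => by
      have h0 : ∀ x : U, x = 0 := fun x => by
        calc x = (1 : R) • x := (one_smul R x).symm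
          _ = (0 : R) • x := by rw [Subsingleton.elim (1 : R) 0]
          _ = 0 := zero_smul R x
      rw [h0 a, h0 b]⟩
    have h1 : #U ≤ 1 := Cardinal.le_one_iff_subsingleton.2 hsub
    have h2 : (ℵ₀ : Cardinal) ≤ 1 := by
      calc ℵ₀ ≤ c := hac
        _ = #U := hcU.symm
        _ ≤ 1 := h1
    exact absurd h2 (by simp [not_le.2 Cardinal.one_lt_aleph0])
  have hone : ∀ γ ∈ S, (1 : Cardinal) < γ := by
    intro γ hγ
    by_contra hle
    push_neg at hle
    obtain ⟨s, hs1, hs2⟩ := hγ ⊤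
    have hs0 : #s = 0 := Cardinal.lt_one_iff_zero.1 (hs1.trans_le hle)
    have hse : s = ∅ := by
      rw [Cardinal.mk_eq_zero_iff] at hs0
      exact Set.eq_empty_iff_forall_notMem.2 fun x hx => hs0.elim' ⟨x, hx⟩
    rw [hse, Ideal.span_empty] at hs2
    have : (1 : R) ∈ (⊥ : Ideal R) := hs2.symm ▸ Submodule.mem_top
    exact one_ne_zero ((Submodule.mem_bot R).1 this)
  apply le_antisymm
  · rw [Cardinal.powerlt_le]
    intro κ hκ
    have hκS : κ ∉ S := fun h => not_lt.2 (csInf_le' h) hκ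
    rw [hSdef, Set.mem_setOf_eq] at hκS
    push_neg at hκS
    obtain ⟨I, hI⟩ := hκS
    refine EklofAux.pow_le R c hc U hU hcU huniv κ I ?_
    intro s hsp
    by_contra hlt2
    push_neg at hlt2
    exact absurd hsp (hI s hlt2)
  · have h1lt : (1 : Cardinal) < sInf S := hone _ (csInf_mem hSne)
    calc c = c ^ (1 : Cardinal) := (Cardinal.power_one c).symm
      _ ≤ c ^< sInf S := Cardinal.le_powerlt c h1lt
end

section
/- Let R be a ring such that every left R-module of cardinality at most 2^{|R|+ℵ₀} is pure-injective. Then every left R-module is pure-injective, i.e., R is left pure-semisimple. -/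
open Cardinal

universe u v

section Aux
variable {R : Type u} [Ring R]

/-- A pp formula: `y ∈ ev φ M` iff `∃ x : Fin k → M, ∀ i, ∑ j, a i j • x j = c i • y`. -/
structure PPF_s19 (R : Type u) [Ring R] where
  k : ℕ
  m : ℕ
  a : Fin m → Fin k → R
  c : Fin m → R

def PPF_s19.ev (φ : PPF_s19 R) (M : Type v) [AddCommGroup M] [Module R M] : Set M :=
  {y | ∃ x : Fin φ.k → M, ∀ i, ∑ j, φ.a i j • x j = φ.c i • y}

variable {M : Type v} [AddCommGroup M] [Module R M]
variable {N : Type*} [AddCommGroup N] [Module R N]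

lemma PPF_s19.ev_map (φ : PPF_s19 R) (f : M →ₗ[R] N) {y : M} (hy : y ∈ φ.ev M) :
    f y ∈ φ.ev N := by
  obtain ⟨x, hx⟩ := hy
  refine ⟨fun j => f (x j), fun i => ?_⟩
  rw [← map_smul]
  rw [← hx i]
  simp [map_sum]

lemma PPF_s19.zero_mem (φ : PPF_s19 R) : (0 : M) ∈ φ.ev M :=
  ⟨0, fun i => by simp⟩

lemma PPF_s19.neg_mem (φ : PPF_s19 R) {y : M} (hy : y ∈ φ.ev M) : -y ∈ φ.ev M := by
  have := φ.ev_map (-(LinearMap.id : M →ₗ[R] M)) hy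
  simpa using this

lemma PPF_s19.ev_pi (φ : PPF_s19 R) {ι : Type*} (y : ι → M)
    (hy : ∀ n, y n ∈ φ.ev M) : y ∈ φ.ev (ι → M) := by
  choose x hx using hy
  refine ⟨fun j n => x n j, fun i => ?_⟩
  funext n
  simpa using hx n i


variable {X : Type*}


/-- A single linear equation `∑ t, c t • s (v t) = b` in unknowns from `X`, values in `M`. -/
structure LinEq (R : Type u) [Ring R] (X : Type*) (M : Type v)
    [AddCommGroup M] [Module R M] where
  n : ℕ
  c : Fin n → R
  v : Fin n → X
  b : M

def LinEq.lhs (e : LinEq R X M) (s : X → M) : M := ∑ t, e.c t • s (e.v t)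

def LinEq.Sat (e : LinEq R X M) (s : X → M) : Prop := e.lhs s = e.b

def LinEq.HSat (e : LinEq R X M) (s : X → M) : Prop := e.lhs s = 0

lemma LinEq.lhs_congr (e : LinEq R X M) {s s' : X → M}
    (h : ∀ t, s (e.v t) = s' (e.v t)) : e.lhs s = e.lhs s' := by
  unfold LinEq.lhs; exact Finset.sum_congr rfl fun t _ => by rw [h t]

lemma LinEq.lhs_add (e : LinEq R X M) (s s' : X → M) :
    e.lhs (s + s') = e.lhs s + e.lhs s' := by
  unfold LinEq.lhs
  simp [smul_add, Finset.sum_add_distrib]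

lemma LinEq.lhs_sub (e : LinEq R X M) (s s' : X → M) :
    e.lhs (s - s') = e.lhs s - e.lhs s' := by
  unfold LinEq.lhs
  simp [smul_sub, Finset.sum_sub_distrib]

open Classical in
/-- Regrouping a linear combination over the distinct variables occurring in it. -/
lemma regroup {n : ℕ} (cc : Fin n → R) (vv : Fin n → X) (W : Finset X)
    (hW : ∀ t, vv t ∈ W) (s : X → M) :
    ∑ t, cc t • s (vv t) =
      ∑ j : Fin W.card,
        (∑ t ∈ Finset.univ.filter (fun t => vv t = (W.equivFin.symm j : X)), cc t) •
          s (W.equivFin.symm j : X) := by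
  classical
  have key : ∀ j : Fin W.card,
      (∑ t ∈ Finset.univ.filter (fun t => vv t = (W.equivFin.symm j : X)), cc t) •
        s ((W.equivFin.symm j : X)) =
      ∑ t ∈ Finset.univ.filter (fun t => W.equivFin ⟨vv t, hW t⟩ = j), cc t • s (vv t) := by
    intro j
    rw [Finset.sum_smul]
    refine Finset.sum_congr ?_ ?_
    · apply Finset.filter_congr
      intro t _
      constructor
      · intro ht
        have : (⟨vv t, hW t⟩ : {x // x ∈ W}) = W.equivFin.symm j := Subtype.ext ht
        rw [this]; simp
      · intro ht
        have : (⟨vv t, hW t⟩ : {x // x ∈ W}) = W.equivFin.symm j := by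
          rw [← ht]; simp
        exact congrArg Subtype.val this
    · intro t ht
      simp only [Finset.mem_filter] at ht
      have : vv t = (W.equivFin.symm j : X) := by
        have h2 := congrArg W.equivFin.symm ht.2
        simp only [Equiv.symm_apply_apply] at h2
        exact congrArg Subtype.val h2.symm ▸ rfl
      rw [this]
  rw [Finset.sum_congr rfl fun j _ => key j]
  exact (Finset.sum_fiberwise Finset.univ (fun t => W.equivFin ⟨vv t, hW t⟩)
    (fun t => cc t • s (vv t))).symm

open Classical in
/-- The matrix of coefficients of an equation relative to an enumeration of a variable set. -/
noncomputable def LinEq.mat (e : LinEq R X M) (W : Finset X) (j : Fin W.card) : R :=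
  ∑ t ∈ Finset.univ.filter (fun t => e.v t = (W.equivFin.symm j : X)), e.c t

lemma regroup_mat (e : LinEq R X M) {N' : Type*} [AddCommGroup N'] [Module R N']
    (W : Finset X) (hW : ∀ t, e.v t ∈ W) (s : X → N') :
    ∑ t, e.c t • s (e.v t) = ∑ j : Fin W.card, e.mat W j • s (W.equivFin.symm j : X) := by
  classical
  exact regroup e.c e.v W hW s

lemma regroup_lhs (e : LinEq R X M) (W : Finset X) (hW : ∀ t, e.v t ∈ W) (s : X → M) :
    e.lhs s = ∑ j : Fin W.card, e.mat W j • s (W.equivFin.symm j : X) := by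
  classical
  exact regroup e.c e.v W hW s

open Classical in
lemma regroup_ext (e : LinEq R X M) (W : Finset X) (hW : ∀ t, e.v t ∈ W)
    (x : Fin W.card → M) :
    e.lhs (fun y => if h : y ∈ W then x (W.equivFin ⟨y, h⟩) else 0) =
      ∑ j : Fin W.card, e.mat W j • x j := by
  classical
  rw [regroup_lhs e W hW]
  refine Finset.sum_congr rfl fun j _ => ?_
  congr 1
  rw [dif_pos (W.equivFin.symm j).2]
  congr 1
  rw [Subtype.coe_eta]
  simp


open Classical in
/-- The set of values of `s x₀` over solutions `s` of a finite homogeneous system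
is a pp-definable subset. -/
lemma ppOfSystem {κ : Type*} [Fintype κ] (ee : κ → LinEq R X M) (x₀ : X) :
    ∃ φ : PPF_s19 R, φ.ev M = {v | ∃ s : X → M, (∀ t, (ee t).HSat s) ∧ s x₀ = v} := by
  classical
  set W : Finset X := insert x₀ (Finset.univ.biUnion fun t => Finset.image (ee t).v Finset.univ)
    with hWdef
  have hWv : ∀ t tt, (ee t).v tt ∈ W := by
    intro t tt
    apply Finset.mem_insert_of_mem
    exact Finset.mem_biUnion.2 ⟨t, Finset.mem_univ t, Finset.mem_image_of_mem _ (Finset.mem_univ tt)⟩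
  have hx₀ : x₀ ∈ W := Finset.mem_insert_self _ _
  set j₀ : Fin W.card := W.equivFin ⟨x₀, hx₀⟩ with hj₀
  set eκ := Fintype.equivFin κ with heκ
  refine ⟨⟨W.card, Fintype.card κ + 1,
    Fin.snoc (fun i => (ee (eκ.symm i)).mat W) (fun j => if j = j₀ then 1 else 0),
    Fin.snoc (fun _ => 0) 1⟩, ?_⟩
  ext v
  simp only [PPF_s19.ev, Set.mem_setOf_eq]
  constructor
  · rintro ⟨x, hx⟩
    rw [Fin.forall_fin_succ'] at hx
    obtain ⟨hrows, hlast⟩ := hx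
    simp only [Fin.snoc_castSucc, Fin.snoc_last] at hrows hlast
    have hxj₀ : x j₀ = v := by
      have : ∑ j, (if j = j₀ then (1:R) else 0) • x j = ∑ j, if j = j₀ then x j else 0 := by
        refine Finset.sum_congr rfl fun j _ => ?_
        split_ifs <;> simp
      rw [this, Finset.sum_ite_eq' Finset.univ j₀ x] at hlast
      simpa using hlast
    refine ⟨fun y => if h : y ∈ W then x (W.equivFin ⟨y, h⟩) else 0, fun t => ?_, ?_⟩
    · show LinEq.lhs _ _ = 0
      rw [regroup_ext (ee t) W (hWv t) x]
      have := hrows (eκ t)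
      rw [Equiv.symm_apply_apply] at this
      simpa using this
    · show (if h : x₀ ∈ W then x (W.equivFin ⟨x₀, h⟩) else 0) = v
      rw [dif_pos hx₀, ← hj₀, hxj₀]
  · rintro ⟨s, hs, hsx⟩
    refine ⟨fun j => s (W.equivFin.symm j : X), ?_⟩
    rw [Fin.forall_fin_succ']
    constructor
    · intro i
      simp only [Fin.snoc_castSucc]
      have := hs (eκ.symm i)
      rw [LinEq.HSat, regroup_lhs _ W (hWv _)] at this
      rw [this]
      simp
    · simp only [Fin.snoc_last]
      have h1 : ∑ j, (if j = j₀ then (1:R) else 0) • s (W.equivFin.symm j : X)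
          = ∑ j, if j = j₀ then s (W.equivFin.symm j : X) else 0 := by
        refine Finset.sum_congr rfl fun j _ => ?_
        split_ifs <;> simp
      rw [h1, Finset.sum_ite_eq' Finset.univ j₀ (fun j => s (W.equivFin.symm j : X))]
      simp only [Finset.mem_univ, if_true, hj₀, Equiv.symm_apply_apply]
      rw [hsx]
      simp

open Classical in
/-- A finite system with constants in `M` solvable across a pure map is solvable in `M`. -/
lemma solveOfPure {M' N' : Type v} [AddCommGroup M'] [Module R M']
    [AddCommGroup N'] [Module R N'] (f : M' →ₗ[R] N') (hf : IsPureMap R f)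
    {κ : Type*} [Fintype κ] (ee : κ → LinEq R X M')
    (sN : X → N') (hsN : ∀ t, ∑ tt, (ee t).c tt • sN ((ee t).v tt) = f (ee t).b) :
    ∃ s : X → M', ∀ t, (ee t).Sat s := by
  classical
  set W : Finset X := Finset.univ.biUnion fun t => Finset.image (ee t).v Finset.univ with hW
  have hWv : ∀ t tt, (ee t).v tt ∈ W :=
    fun t tt => Finset.mem_biUnion.2 ⟨t, Finset.mem_univ t,
      Finset.mem_image_of_mem _ (Finset.mem_univ tt)⟩
  set eκ := Fintype.equivFin κ with heκ
  obtain ⟨x, hx⟩ := hf (Fintype.card κ) W.card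
    (fun i j => (ee (eκ.symm i)).mat W j) (fun i => (ee (eκ.symm i)).b)
    ⟨fun j => sN (W.equivFin.symm j : X), fun i =>
      ((regroup_mat (ee (eκ.symm i)) W (hWv _) sN).symm.trans (hsN (eκ.symm i)))⟩
  refine ⟨fun y => if h : y ∈ W then x (W.equivFin ⟨y, h⟩) else 0, fun t => ?_⟩
  show LinEq.lhs _ _ = _
  rw [regroup_ext (ee t) W (hWv t) x]
  have := hx (eκ t)
  rw [Equiv.symm_apply_apply] at this
  exact this

/-- Constraint equation `s x = v`. -/
def ceq (p : X × M) : LinEq R X M := ⟨1, fun _ => 1, fun _ => p.1, p.2⟩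

lemma ceq_lhs (p : X × M) (s : X → M) : (ceq p : LinEq R X M).lhs s = s p.1 := by
  show ∑ _t : Fin 1, (1 : R) • s p.1 = s p.1
  simp

/-- Equational compactness from the minimal-condition on pp-definable subsets. -/
lemma eqCompact {ι : Type*} (E : ι → LinEq R X M)
    (hmin : ∀ 𝒮 : Set (Set M), 𝒮.Nonempty → (∀ S ∈ 𝒮, ∃ φ : PPF_s19 R, φ.ev M = S) →
      ∃ S ∈ 𝒮, ∀ T ∈ 𝒮, T ⊆ S → T = S)
    (hfin : ∀ F : Finset ι, ∃ s : X → M, ∀ i ∈ F, (E i).Sat s) :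
    ∃ s : X → M, ∀ i, (E i).Sat s := by
  classical
  set P : Set (X × M) → Prop := fun A => ∀ (F : Finset ι) (B : Finset (X × M)), ↑B ⊆ A →
    ∃ s : X → M, (∀ i ∈ F, (E i).Sat s) ∧ ∀ p ∈ B, s p.1 = p.2 with hP
  have hPempty : P ∅ := by
    intro F B hB
    obtain ⟨s, hs⟩ := hfin F
    have hBe : B = ∅ := Finset.coe_eq_empty.mp (Set.subset_empty_iff.mp hB)
    exact ⟨s, hs, by simp [hBe]⟩
  have hchainUB : ∀ c ⊆ {A | P A}, IsChain (fun x1 x2 => x1 ⊆ x2) c → c.Nonempty →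
      ∃ ub ∈ {A | P A}, ∀ s ∈ c, s ⊆ ub := by
    intro c hcS hchain hcne
    refine ⟨⋃₀ c, ?_, fun a ha => Set.subset_sUnion_of_mem ha⟩
    intro F B hB
    have : ∃ a ∈ c, ↑B ⊆ a := by
      classical
      induction B using Finset.induction_on with
      | empty => obtain ⟨a, ha⟩ := hcne; exact ⟨a, ha, by simp⟩
      | @insert p B' hp ih =>
        have hB' : ↑B' ⊆ ⋃₀ c := by
          refine Set.Subset.trans ?_ hB; simp [Finset.coe_insert]
        obtain ⟨a1, ha1, hBa1⟩ := ih hB'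
        have hpc : p ∈ ⋃₀ c := hB (by simp)
        obtain ⟨a2, ha2, hpa2⟩ := hpc
        rcases hchain.total ha1 ha2 with h12 | h21
        · exact ⟨a2, ha2, by
            rw [Finset.coe_insert]
            exact Set.insert_subset hpa2 (hBa1.trans h12)⟩
        · exact ⟨a1, ha1, by
            rw [Finset.coe_insert]
            exact Set.insert_subset (h21 hpa2) hBa1⟩
    obtain ⟨a, hac, hBa⟩ := this
    exact hcS hac F B hBa
  obtain ⟨A, -, hAS, hAmax⟩ :
      ∃ A, ∅ ⊆ A ∧ P A ∧ ∀ A' , P A' → A ⊆ A' → A' ⊆ A := by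
    obtain ⟨A, hsub, hmax⟩ := zorn_subset_nonempty {A | P A} hchainUB ∅ hPempty
    exact ⟨A, hsub, hmax.1, fun A' h1 h2 => hmax.2 h1 h2⟩
  -- every unknown gets a value in A
  have htotal : ∀ x : X, ∃ v, (x, v) ∈ A := by
    by_contra hcon
    push_neg at hcon
    obtain ⟨x₀, hx₀⟩ := hcon
    -- combined finite systems
    set sys : (F : Finset ι) → (B : Finset (X × M)) → (↥F ⊕ ↥B → LinEq R X M) := fun F B =>
      Sum.elim (fun i : ↥F => E i) (fun p : ↥B => ceq (p : X × M)) with hsys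
    set G : Finset ι → Finset (X × M) → Set M := fun F B =>
      {v | ∃ s : X → M, (∀ t, (sys F B t).HSat s) ∧ s x₀ = v} with hG
    set 𝒮 : Set (Set M) := {S | ∃ F B, ↑B ⊆ A ∧ S = G F B} with h𝒮
    have h𝒮ne : 𝒮.Nonempty := ⟨G ∅ ∅, ∅, ∅, by simp, rfl⟩
    have h𝒮pp : ∀ S ∈ 𝒮, ∃ φ : PPF_s19 R, φ.ev M = S := by
      rintro S ⟨F, B, hB, rfl⟩
      exact ppOfSystem (sys F B) x₀
    obtain ⟨S₀, hS₀mem, hS₀min⟩ := hmin 𝒮 h𝒮ne h𝒮pp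
    obtain ⟨F₀, B₀, hB₀, rfl⟩ := hS₀mem
    obtain ⟨s₀, hs₀⟩ := hAS F₀ B₀ hB₀
    set v₀ : M := s₀ x₀ with hv₀
    have key : ∀ (F : Finset ι) (B : Finset (X × M)), ↑B ⊆ A →
        ∃ s : X → M, (∀ i ∈ F, (E i).Sat s) ∧ (∀ p ∈ B, s p.1 = p.2) ∧ s x₀ = v₀ := by
      intro F B hB
      obtain ⟨s₁, hs₁⟩ := hAS (F ∪ F₀) (B ∪ B₀) (by
        rw [Finset.coe_union]; exact Set.union_subset hB hB₀)
      have hmono : G (F ∪ F₀) (B ∪ B₀) ⊆ G F₀ B₀ := by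
        rintro v ⟨s, hs, rfl⟩
        refine ⟨s, fun t => ?_, rfl⟩
        rcases t with i | p
        · exact hs (Sum.inl ⟨i, Finset.mem_union_right _ i.2⟩)
        · exact hs (Sum.inr ⟨p, Finset.mem_union_right _ p.2⟩)
      have hGmem : G (F ∪ F₀) (B ∪ B₀) ∈ 𝒮 :=
        ⟨F ∪ F₀, B ∪ B₀, by rw [Finset.coe_union]; exact Set.union_subset hB hB₀, rfl⟩
      have heq : G (F ∪ F₀) (B ∪ B₀) = G F₀ B₀ := hS₀min _ hGmem hmono
      have hδ : v₀ - s₁ x₀ ∈ G F₀ B₀ := by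
        refine ⟨s₀ - s₁, fun t => ?_, rfl⟩
        rcases t with i | p
        · show (E (i : ι)).lhs _ = 0
          rw [LinEq.lhs_sub]
          rw [hs₀.1 i i.2, hs₁.1 i (Finset.mem_union_right _ i.2), sub_self]
        · show (ceq (p : X × M)).lhs _ = 0
          rw [LinEq.lhs_sub, ceq_lhs, ceq_lhs]
          show s₀ (p : X × M).1 - s₁ (p : X × M).1 = 0
          rw [hs₀.2 p p.2, hs₁.2 p (Finset.mem_union_right _ p.2), sub_self]
      rw [← heq] at hδ
      obtain ⟨t, ht, htx⟩ := hδ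
      refine ⟨s₁ + t, fun i hi => ?_, fun p hp => ?_, ?_⟩
      · show (E i).lhs _ = _
        rw [LinEq.lhs_add, hs₁.1 i (Finset.mem_union_left _ hi)]
        have := ht (Sum.inl ⟨i, Finset.mem_union_left _ hi⟩)
        simp only [hsys, Sum.elim_inl, LinEq.HSat] at this
        rw [this, add_zero]
      · have := ht (Sum.inr ⟨p, Finset.mem_union_left _ hp⟩)
        simp only [hsys, Sum.elim_inr, LinEq.HSat, ceq_lhs] at this
        show s₁ p.1 + t p.1 = p.2
        rw [this, add_zero]
        exact hs₁.2 p (Finset.mem_union_left _ hp)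
      · show s₁ x₀ + t x₀ = v₀
        rw [htx]
        abel
    -- extend A, contradiction with maximality
    have hA' : P (insert (x₀, v₀) A) := by
      intro F B' hB'
      set B : Finset (X × M) := B'.erase (x₀, v₀) with hBdef
      have hB : ↑B ⊆ A := by
        intro p hp
        simp only [hBdef, Finset.coe_erase, Set.mem_diff, Finset.mem_coe] at hp
        rcases hB' hp.1 with h | h
        · exact absurd h hp.2
        · exact h
      obtain ⟨s, hs1, hs2, hs3⟩ := key F B hB
      refine ⟨s, hs1, fun p hp => ?_⟩
      by_cases hpe : p = (x₀, v₀)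
      · rw [hpe]; exact hs3
      · exact hs2 p (Finset.mem_erase.mpr ⟨hpe, hp⟩)
    have : insert (x₀, v₀) A ⊆ A := hAmax _ hA' (Set.subset_insert _ _)
    exact hx₀ v₀ (this (Set.mem_insert _ _))
  -- assemble the global solution
  choose sA hsA using htotal
  refine ⟨sA, fun i => ?_⟩
  classical
  set B : Finset (X × M) :=
    Finset.image (fun t => ((E i).v t, sA ((E i).v t))) Finset.univ with hBdef
  have hB : ↑B ⊆ A := by
    intro p hp
    simp only [hBdef, Finset.coe_image, Set.mem_image] at hp
    obtain ⟨t, -, rfl⟩ := hp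
    exact hsA _
  obtain ⟨s', hs'1, hs'2⟩ := hAS {i} B hB
  have : (E i).lhs sA = (E i).lhs s' := by
    refine (E i).lhs_congr fun t => ?_
    exact (hs'2 ((E i).v t, sA ((E i).v t))
      (Finset.mem_image_of_mem _ (Finset.mem_univ t))).symm
  rw [LinEq.Sat, this]
  exact hs'1 i (Finset.mem_singleton_self i)

end Aux

/-- The descending chain condition for pp-definable subsets of an arbitrary module,
from pure-injectivity of all small modules. -/
lemma chainDCC {R : Type u} [Ring R]
    (h : ∀ (M : Type u) [AddCommGroup M] [Module R M],
      #M ≤ 2 ^ (#R + ℵ₀) → PureInjective R M)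
    (M : Type u) [AddCommGroup M] [Module R M]
    (φ : ℕ → PPF_s19 R) (hdesc : ∀ n, (φ (n+1)).ev M ⊆ (φ n).ev M) :
    ∃ n, (φ n).ev M ⊆ (φ (n+1)).ev M := by
  classical
  by_contra hcon
  push_neg at hcon
  have hex : ∀ n, ∃ u, u ∈ (φ n).ev M ∧ u ∉ (φ (n+1)).ev M := by
    intro n
    obtain ⟨u, hu1, hu2⟩ := Set.not_subset.mp (hcon n)
    exact ⟨u, hu1, hu2⟩
  choose uu hu1 hu2 using hex
  have hmono : ∀ k n, k ≤ n → (φ n).ev M ⊆ (φ k).ev M := by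
    intro k n hkn
    induction hkn with
    | refl => exact subset_rfl
    | step _ ih => rename_i m hm; exact (hdesc m).trans ih
  have hwit : ∀ q : ℕ × ℕ, ∃ x : Fin (φ q.2).k → M,
      q.2 ≤ q.1 → ∀ i, ∑ j, (φ q.2).a i j • x j = (φ q.2).c i • uu q.1 := by
    intro q
    by_cases hq : q.2 ≤ q.1
    · obtain ⟨x, hx⟩ := hmono q.2 q.1 hq (hu1 q.1)
      exact ⟨x, fun _ => hx⟩
    · exact ⟨0, fun hk => absurd hk hq⟩
  choose w hw using hwit
  -- a small submodule containing all the data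
  set e4 : ℕ ≃ ℕ ⊕ ℕ × ℕ × ℕ := (Denumerable.eqv (ℕ ⊕ ℕ × ℕ × ℕ)).symm with he4
  set gens : ULift.{u} ℕ → M := fun n =>
    Sum.elim (fun m => uu m)
      (fun t => if ht : t.2.2 < (φ t.2.1).k then w (t.1, t.2.1) ⟨t.2.2, ht⟩ else 0)
      (e4 n.down) with hgens
  set M₀ : Submodule R M := LinearMap.range (Finsupp.linearCombination R gens) with hM₀
  have hgen : ∀ i, gens i ∈ M₀ :=
    fun i => ⟨Finsupp.single i 1, by rw [Finsupp.linearCombination_single, one_smul]⟩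
  have huM : ∀ n, uu n ∈ M₀ := by
    intro n
    have := hgen (ULift.up (e4.symm (Sum.inl n)))
    simpa [hgens, Equiv.apply_symm_apply] using this
  have hwM : ∀ (n k : ℕ) (j : Fin (φ k).k), w (n, k) j ∈ M₀ := by
    intro n k j
    have := hgen (ULift.up (e4.symm (Sum.inr (n, k, (j : ℕ)))))
    simp only [hgens, Equiv.apply_symm_apply, Sum.elim_inr] at this
    rw [dif_pos j.isLt] at this
    simpa using this
  -- cardinality bounds
  have hRbound : #R ≤ 2 ^ (#R + ℵ₀) :=
    (cantor _).le.trans (power_le_power_left two_ne_zero (self_le_add_right _ _))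
  have hexp : ((2 : Cardinal.{u}) ^ (#R + ℵ₀)) ^ (ℵ₀ : Cardinal.{u}) = 2 ^ (#R + ℵ₀) := by
    rw [← power_mul, mul_eq_max le_add_self le_rfl, max_eq_left le_add_self]
  have hM₀card : #↥M₀ ≤ 2 ^ (#R + ℵ₀) := by
    have h1 : #↥M₀ ≤ #(ULift.{u} ℕ →₀ R) :=
      mk_le_of_surjective (LinearMap.surjective_rangeRestrict _)
    have h2 : #(ULift.{u} ℕ →₀ R) ≤ #(ULift.{u} ℕ → R) :=
      mk_le_of_injective (DFunLike.coe_injective)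
    have h3 : #(ULift.{u} ℕ → R) = #R ^ (ℵ₀ : Cardinal.{u}) := by simp [mk_arrow]
    calc #↥M₀ ≤ #R ^ (ℵ₀ : Cardinal.{u}) := (h1.trans h2).trans_eq h3
    _ ≤ ((2 : Cardinal.{u}) ^ (#R + ℵ₀)) ^ (ℵ₀ : Cardinal.{u}) := power_le_power_right hRbound
    _ = 2 ^ (#R + ℵ₀) := hexp
  -- the countable direct sum of M₀ is small, hence pure-injective
  have hDcard : #(ℕ →₀ ↥M₀) ≤ 2 ^ (#R + ℵ₀) := by
    have h2 : #(ℕ →₀ ↥M₀) ≤ #(ℕ → ↥M₀) := mk_le_of_injective (DFunLike.coe_injective)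
    have h3 : #(ℕ → ↥M₀) = lift.{0} #↥M₀ ^ lift.{u} #ℕ := mk_arrow _ _
    have h4 : #(ℕ → ↥M₀) ≤ ((2 : Cardinal.{u}) ^ (#R + ℵ₀)) ^ (ℵ₀ : Cardinal.{u}) := by
      rw [h3]
      simp only [Cardinal.lift_id', Cardinal.lift_id, Cardinal.mk_nat, Cardinal.lift_aleph0]
      exact power_le_power_right hM₀card
    exact h2.trans (h4.trans_eq hexp)
  have hpi : PureInjective R (ℕ →₀ ↥M₀) := h _ hDcard
  -- the coercion from the direct sum to the product is a pure embedding
  set fD : (ℕ →₀ ↥M₀) →ₗ[R] (ℕ → ↥M₀) := Finsupp.lcoeFun with hfD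
  have hfDinj : Function.Injective fD := DFunLike.coe_injective
  have hfDapp : ∀ (d : ℕ →₀ ↥M₀) (n : ℕ), fD d n = d n := fun _ _ => rfl
  have hfDpure : IsPureMap R fD := by
    intro m k a b hx
    obtain ⟨x, hx⟩ := hx
    set T : Finset ℕ := Finset.univ.biUnion (fun i : Fin m => (b i).support) with hT
    refine ⟨fun j => ∑ n ∈ T, Finsupp.single n (x j n), fun i => ?_⟩
    ext n
    rw [Finsupp.finset_sum_apply]
    have hterm : ∀ j, (a i j • ∑ n' ∈ T, Finsupp.single n' (x j n')) n
        = a i j • (if n ∈ T then x j n else 0) := by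
      intro j
      rw [Finsupp.smul_apply, Finsupp.finset_sum_apply]
      congr 1
      have : ∀ n' ∈ T, (Finsupp.single n' (x j n')) n
          = if n' = n then x j n' else 0 := fun n' _ => Finsupp.single_apply
      rw [Finset.sum_congr rfl this, Finset.sum_ite_eq' T n (fun n' => x j n')]
    rw [Finset.sum_congr rfl (fun j _ => hterm j)]
    by_cases hn : n ∈ T
    · simp only [if_pos hn]
      have := congrFun (hx i) n
      simp only [Finset.sum_apply, Pi.smul_apply] at this
      rw [this, hfDapp]
    · simp only [if_neg hn, smul_zero, Finset.sum_const_zero]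
      have : n ∉ (b i).support := fun hmem =>
        hn (Finset.mem_biUnion.mpr ⟨i, Finset.mem_univ i, hmem⟩)
      simp [Finsupp.notMem_support_iff.mp this]
  obtain ⟨g, hg⟩ := hpi (ℕ → ↥M₀) fD hfDinj hfDpure
  -- the tails
  set ub : ℕ → ↥M₀ := fun n => ⟨uu n, huM n⟩ with hub
  have hubev : ∀ k n, k ≤ n → ub n ∈ (φ k).ev ↥M₀ := by
    intro k n hkn
    refine ⟨fun j => ⟨w (n, k) j, hwM n k j⟩, fun i => ?_⟩
    apply Subtype.ext
    rw [Submodule.coe_sum]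
    simp only [SetLike.val_smul]
    exact hw (n, k) hkn i
  set ww : ℕ → (ℕ → ↥M₀) := fun k n => if k ≤ n then ub n else 0 with hww
  have hwwev : ∀ k, ww k ∈ (φ k).ev (ℕ → ↥M₀) := by
    intro k
    refine PPF_s19.ev_pi _ _ (fun n => ?_)
    by_cases hkn : k ≤ n
    · simp only [hww, if_pos hkn]; exact hubev k n hkn
    · simp only [hww, if_neg hkn]; exact PPF_s19.zero_mem _
  have hstep : ∀ k, ww k = fD (Finsupp.single k (ub k)) + ww (k + 1) := by
    intro k
    funext n
    simp only [Pi.add_apply, hww, hfDapp]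
    rcases lt_trichotomy n k with hlt | heq | hgt
    · rw [if_neg (by omega), if_neg (by omega), Finsupp.single_apply, if_neg (by omega)]
      simp
    · subst heq
      rw [if_pos le_rfl, if_neg (by omega), Finsupp.single_apply, if_pos rfl, add_zero]
    · rw [if_pos (by omega), if_pos (by omega), Finsupp.single_apply, if_neg (by omega),
        zero_add]
  set z : ℕ → (ℕ →₀ ↥M₀) := fun k => g (ww k) with hz
  have hzstep : ∀ k, z k = Finsupp.single k (ub k) + z (k + 1) := by
    intro k
    have : g (ww k) = g (fD (Finsupp.single k (ub k))) + g (ww (k + 1)) := by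
      rw [← map_add, ← hstep k]
    rw [hz]
    simp only []
    rw [this]
    congr 1
    exact LinearMap.congr_fun hg (Finsupp.single k (ub k))
  have htel : ∀ n, z 0 = (∑ k ∈ Finset.range n, Finsupp.single k (ub k)) + z n := by
    intro n
    induction n with
    | zero => simp
    | succ n ih =>
      rw [ih, hzstep n, Finset.sum_range_succ]
      abel
  obtain ⟨j, hj⟩ := Infinite.exists_notMem_finset (z 0).support
  have h0 : (z 0) j = 0 := Finsupp.notMem_support_iff.mp hj
  have heval : (0 : ↥M₀) = ub j + (z (j + 1)) j := by
    have := congrArg (fun d : ℕ →₀ ↥M₀ => d j) (htel (j + 1))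
    simp only [Finsupp.add_apply, Finsupp.finset_sum_apply] at this
    rw [h0] at this
    have hsum : ∑ k ∈ Finset.range (j + 1), (Finsupp.single k (ub k)) j = ub j := by
      have hterms : ∀ k ∈ Finset.range (j + 1), (Finsupp.single k (ub k)) j
          = if k = j then ub k else 0 := fun k _ => Finsupp.single_apply
      rw [Finset.sum_congr rfl hterms, Finset.sum_ite_eq' _ j (fun k => ub k),
        if_pos (Finset.self_mem_range_succ j)]
    rw [hsum] at this
    exact this
  have hneg : (z (j + 1)) j = -ub j := eq_neg_of_add_eq_zero_right heval.symm
  have hm1 : z (j + 1) ∈ (φ (j + 1)).ev (ℕ →₀ ↥M₀) := (φ (j + 1)).ev_map g (hwwev (j + 1))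
  have hm2 : (z (j + 1)) j ∈ (φ (j + 1)).ev ↥M₀ := by
    have := (φ (j + 1)).ev_map (Finsupp.lapply j) hm1
    simpa using this
  rw [hneg] at hm2
  have hm3 : ub j ∈ (φ (j + 1)).ev ↥M₀ := by
    have := (φ (j + 1)).neg_mem hm2
    simpa using this
  have hm4 : uu j ∈ (φ (j + 1)).ev M := by
    have := (φ (j + 1)).ev_map (M₀.subtype) hm3
    simpa using this
  exact hu2 j hm4

lemma exists_min {R : Type u} [Ring R] {M : Type v} [AddCommGroup M] [Module R M]
    (hdcc : ∀ φ : ℕ → PPF_s19 R, (∀ n, (φ (n+1)).ev M ⊆ (φ n).ev M) →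
      ∃ n, (φ n).ev M ⊆ (φ (n+1)).ev M)
    (𝒮 : Set (Set M)) (hne : 𝒮.Nonempty) (hpp : ∀ S ∈ 𝒮, ∃ φ : PPF_s19 R, φ.ev M = S) :
    ∃ S ∈ 𝒮, ∀ T ∈ 𝒮, T ⊆ S → T = S := by
  by_contra hcon
  push_neg at hcon
  obtain ⟨S0, hS0⟩ := hne
  choose! T hT1 hT2 hT3 using hcon
  set C : ℕ → Set M := fun n => Nat.rec S0 (fun _ S => T S) n with hC
  have hCmem : ∀ n, C n ∈ 𝒮 := by
    intro n
    induction n with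
    | zero => exact hS0
    | succ n ih => exact hT1 _ ih
  have hCstep : ∀ n, C (n + 1) = T (C n) := fun n => rfl
  choose φf hφf using fun n => hpp (C n) (hCmem n)
  obtain ⟨n, hn⟩ := hdcc φf (fun n => by
    rw [hφf n, hφf (n + 1), hCstep n]
    exact hT2 _ (hCmem n))
  rw [hφf n, hφf (n + 1), hCstep n] at hn
  exact hT3 _ (hCmem n) (Set.Subset.antisymm (hT2 _ (hCmem n)) hn)

/-- If every left `R`-module of cardinality at most `2 ^ (|R| + ℵ₀)` is pure-injective,
then every left `R`-module is pure-injective. -/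
theorem pureSemisimple_of_small_pureInjective (R : Type u) [Ring R]
    (h : ∀ (M : Type u) [AddCommGroup M] [Module R M],
      #M ≤ 2 ^ (#R + ℵ₀) → PureInjective R M) :
    ∀ (M : Type u) [AddCommGroup M] [Module R M], PureInjective R M := by
  intro M _ _ N _ _ f hinj hpure
  classical
  set E : (M ⊕ (N × N) ⊕ (R × N)) → LinEq R N M := fun i =>
    match i with
    | Sum.inl m => ⟨1, fun _ => 1, fun _ => f m, m⟩
    | Sum.inr (Sum.inl (n₁, n₂)) => ⟨3, ![1, 1, -1], ![n₁, n₂, n₁ + n₂], 0⟩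
    | Sum.inr (Sum.inr (r, n)) => ⟨2, ![r, -1], ![n, r • n], 0⟩ with hE
  have hid : ∀ i, ∑ t, (E i).c t • (id : N → N) ((E i).v t) = f (E i).b := by
    rintro (m | ⟨n₁, n₂⟩ | ⟨r, n⟩)
    · simp [E]
    · show ∑ t : Fin 3, _ = f (0 : M)
      rw [Fin.sum_univ_three]
      simp [E]
      abel
    · show ∑ t : Fin 2, _ = f (0 : M)
      rw [Fin.sum_univ_two]
      simp [E]
  have hmin : ∀ 𝒮 : Set (Set M), 𝒮.Nonempty → (∀ S ∈ 𝒮, ∃ φ : PPF_s19 R, φ.ev M = S) →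
      ∃ S ∈ 𝒮, ∀ T ∈ 𝒮, T ⊆ S → T = S :=
    fun 𝒮 hne hpp => exists_min (chainDCC h M) 𝒮 hne hpp
  have hfin : ∀ F : Finset (M ⊕ (N × N) ⊕ (R × N)),
      ∃ s : N → M, ∀ i ∈ F, (E i).Sat s := by
    intro F
    obtain ⟨s, hs⟩ := solveOfPure f hpure (fun i : ↥F => E i) id (fun t => hid t)
    exact ⟨s, fun i hi => hs ⟨i, hi⟩⟩
  obtain ⟨s, hs⟩ := eqCompact E hmin hfin
  have hadd : ∀ n₁ n₂ : N, s (n₁ + n₂) = s n₁ + s n₂ := by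
    intro n₁ n₂
    have := hs (Sum.inr (Sum.inl (n₁, n₂)))
    rw [LinEq.Sat] at this
    simp only [E, LinEq.lhs] at this
    rw [Fin.sum_univ_three] at this
    simp at this
    have h2 : s n₁ + s n₂ - s (n₁ + n₂) = 0 := by
      rw [← this]; abel
    exact (sub_eq_zero.mp h2).symm
  have hsmul : ∀ (r : R) (n : N), s (r • n) = r • s n := by
    intro r n
    have := hs (Sum.inr (Sum.inr (r, n)))
    rw [LinEq.Sat] at this
    simp only [E, LinEq.lhs] at this
    rw [Fin.sum_univ_two] at this
    simp at this
    have h2 : r • s n - s (r • n) = 0 := by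
      rw [← this]; abel
    exact (sub_eq_zero.mp h2).symm
  refine ⟨⟨⟨s, fun n₁ n₂ => hadd n₁ n₂⟩, fun r n => hsmul r n⟩, ?_⟩
  apply LinearMap.ext
  intro m
  have := hs (Sum.inl m)
  rw [LinEq.Sat] at this
  simp only [hE, LinEq.lhs] at this
  rw [Fin.sum_univ_one, one_smul] at this
  simpa using this
end
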